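/- arXiv:cs/0505030 — 4 statements merged into one kernel-verified Lean document; each statement's English description precedes it below -/
import Mathlib

section
/- Let K be a field and M ∈ K[x]^{(n+p)×n} of rank n. Let N = [N_p S] ∈ K[x]^{p×(n+p)} be such that NM = 0, where N_p ∈ K[x]^{p×n} and S ∈ K[x]^{p×p} is non-singular. Then the rows of N form a basis of the left nullspace module of M (as a K[x]-module) if and only if the left matrix fraction description S^{-1}N_p is irreducible, i.e., S and N_p are left coprime. -/
open Polynomial Matrix

namespace PolyNull

variable {K : Type*} [Field K]

/-- Degree of a polynomial row vector: max of `natDegree` of its entries. -/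
noncomputable def vecDeg {m : Type*} [Fintype m] (v : m → Polynomial K) : ℕ :=
  Finset.univ.sup fun i => (v i).natDegree

/-- Degree of a polynomial matrix: max of degrees of its entries. -/
noncomputable def matDeg {m n : Type*} [Fintype m] [Fintype n]
    (M : Matrix m n (Polynomial K)) : ℕ :=
  Finset.univ.sup fun ij : m × n => (M ij.1 ij.2).natDegree

/-- View a polynomial matrix as a matrix over the rational function field `K(x)`. -/
noncomputable def ratMat {m n : Type*} (M : Matrix m n (Polynomial K)) :
    Matrix m n (RatFunc K) :=
  M.map (algebraMap (Polynomial K) (RatFunc K))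

/-- Rank of a polynomial matrix (its rank over `K(x)`). -/
noncomputable def polyRank {m n : Type*} [Fintype m] [Fintype n]
    (M : Matrix m n (Polynomial K)) : ℕ :=
  (ratMat M).rank

/-- The left nullspace `K[x]`-module of a polynomial matrix. -/
noncomputable def leftNullMod {m n : Type*} [Fintype m] (M : Matrix m n (Polynomial K)) :
    Submodule (Polynomial K) (m → Polynomial K) :=
  LinearMap.ker M.vecMulLinear

/-- `N` is a family of rows forming a basis of the left nullspace module of `M`. -/
def IsNullBasis {m n ι : Type*} [Fintype m] (M : Matrix m n (Polynomial K))
    (N : ι → (m → Polynomial K)) : Prop :=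
  LinearIndependent (Polynomial K) N ∧
    Submodule.span (Polynomial K) (Set.range N) = leftNullMod M

/-- Minimal basis of the left nullspace module: a basis whose sorted row degrees are
pointwise minimal among all bases; equivalently (order-free formulation), for every
degree threshold it has at least as many rows of degree at most the threshold as
any other basis. -/
def IsMinimalNullBasis {m n ι : Type*} [Fintype m] [Fintype ι]
    (M : Matrix m n (Polynomial K)) (N : ι → (m → Polynomial K)) : Prop :=
  IsNullBasis M N ∧
    ∀ N' : ι → (m → Polynomial K), IsNullBasis M N' →
      ∀ δ : ℕ, (Finset.univ.filter fun i => vecDeg (N' i) ≤ δ).card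
        ≤ (Finset.univ.filter fun i => vecDeg (N i) ≤ δ).card

open scoped Classical in
/-- McMillan degree of a rank-`r` polynomial matrix: the maximum of the degrees of the
determinants of its `r × r` submatrices. -/
noncomputable def mcMillanDeg {m n : Type*} [Fintype m] [Fintype n]
    (M : Matrix m n (Polynomial K)) (r : ℕ) : ℕ :=
  Finset.univ.sup fun fg : (Fin r → m) × (Fin r → n) =>
    if Function.Injective fg.1 ∧ Function.Injective fg.2 then
      (M.submatrix fg.1 fg.2).det.natDegree
    else 0

/-- Rank of the evaluation of a polynomial matrix at a point of the algebraic closure. -/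
noncomputable def evalRank {m n : Type*} [Fintype n]
    (M : Matrix m n (Polynomial K)) (x₀ : AlgebraicClosure K) : ℕ :=
  (M.map fun f => Polynomial.aeval x₀ f).rank

/-- A polynomial matrix is irreducible (for its rank `r`) if it has rank `r` at every
point of the algebraic closure of `K`. -/
def IsIrreducibleMat {m n : Type*} [Fintype n]
    (M : Matrix m n (Polynomial K)) (r : ℕ) : Prop :=
  ∀ x₀ : AlgebraicClosure K, evalRank M x₀ = r

/-- Leading row coefficient matrix of a polynomial matrix. -/
noncomputable def leadingRowMatrix {k m : Type*} [Fintype m]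
    (N : Matrix k m (Polynomial K)) : Matrix k m K :=
  fun i j => (N i j).coeff (vecDeg (N i))

/-- A polynomial matrix is row-reduced if its leading row coefficient matrix has full
row rank. -/
def IsRowReduced {k m : Type*} [Fintype k] [Fintype m]
    (N : Matrix k m (Polynomial K)) : Prop :=
  (leadingRowMatrix N).rank = Fintype.card k

/-- `S` and `N` are left coprime: every non-singular common left divisor is unimodular. -/
def LeftCoprime {p n : Type*} [Fintype p] [DecidableEq p]
    (S : Matrix p p (Polynomial K)) (N : Matrix p n (Polynomial K)) : Prop :=
  ∀ U : Matrix p p (Polynomial K), U.det ≠ 0 →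
    (∃ S', S = U * S') → (∃ N', N = U * N') → IsUnit U.det

/-- `C` and `T` are right coprime: every non-singular common right divisor is unimodular. -/
def RightCoprime {p n : Type*} [Fintype p] [DecidableEq p]
    (C : Matrix n p (Polynomial K)) (T : Matrix p p (Polynomial K)) : Prop :=
  ∀ U : Matrix p p (Polynomial K), U.det ≠ 0 →
    (∃ C', C = C' * U) → (∃ T', T = T' * U) → IsUnit U.det

section Aux
variable {R : Type*} [CommRing R] [IsDomain R]

lemma vecMul_eq_zero_of_det {m : Type*} [Fintype m] [DecidableEq m]
    {S : Matrix m m R} (hS : S.det ≠ 0) {x : m → R} (h : x ᵥ* S = 0) : x = 0 := by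
  have h2 : x ᵥ* (S * S.adjugate) = 0 := by
    rw [← Matrix.vecMul_vecMul, h, Matrix.zero_vecMul]
  rw [Matrix.mul_adjugate] at h2
  funext k
  have hk := congrFun h2 k
  simp only [Matrix.vecMul, dotProduct, Matrix.smul_apply, Matrix.one_apply,
    smul_eq_mul, mul_ite, mul_one, mul_zero, Finset.sum_ite_eq', Finset.mem_univ,
    if_true, Pi.zero_apply] at hk
  rw [mul_comm] at hk
  exact (mul_eq_zero.mp hk).resolve_left hS

lemma mul_eq_zero_of_det {m n : Type*} [Fintype m] [DecidableEq m]
    {U : Matrix m m R} (hU : U.det ≠ 0) {X : Matrix m n R} (h : U * X = 0) : X = 0 := by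
  have h2 : U.adjugate * (U * X) = 0 := by rw [h, Matrix.mul_zero]
  rw [← Matrix.mul_assoc, Matrix.adjugate_mul, Matrix.smul_mul, Matrix.one_mul] at h2
  ext i j
  have hk := congrFun (congrFun h2 i) j
  simp only [Matrix.smul_apply, smul_eq_mul, Matrix.zero_apply] at hk
  exact (mul_eq_zero.mp hk).resolve_left hU

omit [IsDomain R] in
lemma vecMul_eq_sum' {k m : Type*} [Fintype k] (x : k → R) (A : Matrix k m R) :
    x ᵥ* A = ∑ i, x i • A i := by
  funext j
  simp [Matrix.vecMul, dotProduct, Finset.sum_apply]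

end Aux

set_option maxHeartbeats 1000000 in
set_option synthInstance.maxHeartbeats 400000 in
/-- For `M ∈ K[x]^{(n+p)×n}` of rank `n` and `N = [N_p  S]` with
`N M = 0` and `S` non-singular, the rows of `N` form a basis of the left nullspace
module of `M` iff `S` and `N_p` are left coprime. -/
theorem nullspace_basis_iff_left_coprime
    {n p : ℕ} (M : Matrix (Fin n ⊕ Fin p) (Fin n) (Polynomial K))
    (hrank : polyRank M = n)
    (Np : Matrix (Fin p) (Fin n) (Polynomial K))
    (S : Matrix (Fin p) (Fin p) (Polynomial K))
    (hS : S.det ≠ 0)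
    (hNM : Matrix.fromCols Np S * M = 0) :
    IsNullBasis M (fun i => Matrix.fromCols Np S i) ↔ LeftCoprime S Np := by
  classical
  set N : Matrix (Fin p) (Fin n ⊕ Fin p) (Polynomial K) := Matrix.fromCols Np S with hNdef
  have hrowmem : ∀ i, N i ∈ leftNullMod M := by
    intro i
    simp only [leftNullMod, LinearMap.mem_ker, Matrix.vecMulLinear_apply]
    funext j
    simpa [Matrix.mul_apply, Matrix.vecMul, dotProduct] using
      congrFun (congrFun hNM i) j
  have hindep : LinearIndependent (Polynomial K) (fun i => N i) := by
    rw [Fintype.linearIndependent_iff]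
    intro g hg
    have hg' : g ᵥ* S = 0 := by
      funext j
      have h1 := congrFun hg (Sum.inr j)
      simpa [Matrix.vecMul, dotProduct, N, Finset.sum_apply] using h1
    exact fun i => congrFun (vecMul_eq_zero_of_det hS hg') i
  constructor
  · rintro ⟨-, hspan⟩ U hU ⟨S', hS'⟩ ⟨N', hN'⟩
    set N₂ : Matrix (Fin p) (Fin n ⊕ Fin p) (Polynomial K) := Matrix.fromCols N' S' with hN₂
    have hfac : N = U * N₂ := by
      rw [hNdef, hS', hN', hN₂]
      exact (Matrix.mul_fromCols U N' S').symm
    have hN₂M : N₂ * M = 0 := by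
      apply mul_eq_zero_of_det hU
      rw [← Matrix.mul_assoc, ← hfac, hNM]
    have hmem : ∀ i, N₂ i ∈ Submodule.span (Polynomial K) (Set.range fun i => N i) := by
      intro i
      rw [hspan]
      simp only [leftNullMod, LinearMap.mem_ker, Matrix.vecMulLinear_apply]
      funext j
      simpa [Matrix.mul_apply, Matrix.vecMul, dotProduct] using
        congrFun (congrFun hN₂M i) j
    choose W hW using fun i => (Submodule.mem_span_range_iff_exists_fun _).mp (hmem i)
    have hWN : N₂ = Matrix.of W * N := by
      funext i k
      rw [Matrix.mul_apply]
      have h1 := congrFun (hW i) k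
      simpa [Finset.sum_apply] using h1.symm
    have hUW : U * Matrix.of W = 1 := by
      have h0 : (U * Matrix.of W - 1) * N = 0 := by
        rw [Matrix.sub_mul, Matrix.one_mul, Matrix.mul_assoc, ← hWN, ← hfac, sub_self]
      have hrow : ∀ i, (U * Matrix.of W - 1) i = 0 := by
        intro i
        funext k
        refine Fintype.linearIndependent_iff.mp hindep ((U * Matrix.of W - 1) i) ?_ k
        rw [← vecMul_eq_sum']
        funext j
        simpa [Matrix.mul_apply, Matrix.vecMul, dotProduct] using
          congrFun (congrFun h0 i) j
      funext i j
      have h1 : (U * Matrix.of W) i j - (1 : Matrix (Fin p) (Fin p) (Polynomial K)) i j = 0 :=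
        congrFun (hrow i) j
      exact sub_eq_zero.mp h1
    have hdet : U.det * (Matrix.of W).det = 1 := by
      rw [← Matrix.det_mul, hUW, Matrix.det_one]
    exact IsUnit.of_mul_eq_one _ hdet
  · intro hcop
    -- rational function field facts
    have halg : Function.Injective (algebraMap (Polynomial K) (RatFunc K)) :=
      IsFractionRing.injective _ _
    have hRS : (ratMat S).det ≠ 0 := by
      have hd : (ratMat S).det = algebraMap (Polynomial K) (RatFunc K) S.det :=
        ((algebraMap (Polynomial K) (RatFunc K)).map_det S).symm
      rw [hd]
      exact fun h => hS (halg (by simpa using h))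
    have hRNM : ratMat N * ratMat M = 0 := by
      have h1 := congrArg (fun X => X.map (algebraMap (Polynomial K) (RatFunc K))) hNM
      simpa [ratMat, Matrix.map_mul] using h1
    have hRindep : LinearIndependent (RatFunc K) (fun i => ratMat N i) := by
      rw [Fintype.linearIndependent_iff]
      intro g hg
      have hg' : g ᵥ* ratMat S = 0 := by
        funext j
        have h1 := congrFun hg (Sum.inr j)
        simpa [Matrix.vecMul, dotProduct, ratMat, Matrix.map_apply, N,
          Finset.sum_apply] using h1
      exact fun i => congrFun (vecMul_eq_zero_of_det hRS hg') i
    -- dimension of the rational left null space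
    have hkereq : LinearMap.ker (ratMat M).vecMulLinear
        = LinearMap.ker (ratMat M)ᵀ.mulVecLin := by
      ext v
      simp [Matrix.mulVec_transpose]
    have hkerdim : Module.finrank (RatFunc K) (LinearMap.ker (ratMat M).vecMulLinear) = p := by
      have h1 := LinearMap.finrank_range_add_finrank_ker (ratMat M)ᵀ.mulVecLin
      have h2 : Module.finrank (RatFunc K) (LinearMap.range (ratMat M)ᵀ.mulVecLin)
          = (ratMat M)ᵀ.rank := rfl
      rw [h2, Matrix.rank_transpose] at h1
      have h3 : (ratMat M).rank = n := hrank
      have h4 : Module.finrank (RatFunc K) (Fin n ⊕ Fin p → RatFunc K) = n + p := by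
        simp [Module.finrank_pi]
      rw [h3, h4] at h1
      rw [hkereq]
      omega
    -- the rows of ratMat N span the rational left null space
    have hspanker : Submodule.span (RatFunc K) (Set.range fun i => ratMat N i)
        = LinearMap.ker (ratMat M).vecMulLinear := by
      have hle : Submodule.span (RatFunc K) (Set.range fun i => ratMat N i)
          ≤ LinearMap.ker (ratMat M).vecMulLinear := by
        rw [Submodule.span_le]
        rintro x ⟨i, rfl⟩
        simp only [SetLike.mem_coe, LinearMap.mem_ker, Matrix.vecMulLinear_apply]
        funext j
        simpa [Matrix.mul_apply, Matrix.vecMul, dotProduct] using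
          congrFun (congrFun hRNM i) j
      refine Submodule.eq_of_le_of_finrank_le hle ?_
      rw [hkerdim, finrank_span_eq_card hRindep]
      simp
    -- every element of the polynomial null module rationally lies in the span of rows of N
    have hratmem : ∀ v : (Fin n ⊕ Fin p) → Polynomial K, v ∈ leftNullMod M →
        (fun k => algebraMap (Polynomial K) (RatFunc K) (v k)) ∈
          Submodule.span (RatFunc K) (Set.range fun i => ratMat N i) := by
      intro v hv
      rw [hspanker]
      simp only [LinearMap.mem_ker, Matrix.vecMulLinear_apply]
      funext j
      show ((fun k => algebraMap (Polynomial K) (RatFunc K) (v k)) ᵥ* ratMat M) j = 0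
      have h1 : (∑ x, v x * M x j) = 0 := by
        have h2 := congrFun (show v ᵥ* M = 0 from hv) j
        simpa [Matrix.vecMul, dotProduct] using h2
      calc ((fun k => algebraMap (Polynomial K) (RatFunc K) (v k)) ᵥ* ratMat M) j
          = algebraMap (Polynomial K) (RatFunc K) (∑ x, v x * M x j) := by
            simp [Matrix.vecMul, dotProduct, ratMat, Matrix.map_apply, map_sum]
        _ = 0 := by rw [h1, map_zero]
    have hinj0 : ∀ v ∈ leftNullMod M, (∀ j, v (Sum.inr j) = 0) → v = 0 := by
      intro v hv hv2
      obtain ⟨c, hc⟩ := (Submodule.mem_span_range_iff_exists_fun _).mp (hratmem v hv)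
      have hcS : c ᵥ* ratMat S = 0 := by
        funext j
        have h1 := congrFun hc (Sum.inr j)
        have h2 : (c ᵥ* ratMat S) j = (∑ i, c i • ratMat N i) (Sum.inr j) := by
          simp [Matrix.vecMul, dotProduct, Finset.sum_apply, ratMat,
            Matrix.map_apply, N, Matrix.fromCols_apply_inr]
        have h3 : algebraMap (Polynomial K) (RatFunc K) (v (Sum.inr j)) = 0 := by
          rw [hv2 j, map_zero]
        show (c ᵥ* ratMat S) j = 0
        rw [h2, h1]
        exact h3
      have hc0 : c = 0 := vecMul_eq_zero_of_det hRS hcS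
      funext k
      have h1 := congrFun hc k
      rw [hc0] at h1
      simp only [Pi.zero_apply, zero_smul, Finset.sum_const_zero, Finset.sum_apply,
        zero_mul] at h1
      exact halg (by simpa using h1.symm)
    -- an injective linear map from the null module into `K[x]^p`
    let f : leftNullMod M →ₗ[Polynomial K] (Fin p → Polynomial K) :=
      (LinearMap.funLeft (Polynomial K) (Polynomial K) Sum.inr).comp
        (Submodule.subtype (leftNullMod M))
    have hfinj : Function.Injective f := by
      intro a b hab
      apply Subtype.ext
      have hsub : ((a : (Fin n ⊕ Fin p) → Polynomial K) - b) = 0 := by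
        apply hinj0 _ (sub_mem a.2 b.2)
        intro j
        have h1 : (a : (Fin n ⊕ Fin p) → Polynomial K) (Sum.inr j)
            = (b : (Fin n ⊕ Fin p) → Polynomial K) (Sum.inr j) := congrFun hab j
        simp [Pi.sub_apply, h1]
      exact sub_eq_zero.mp hsub
    obtain ⟨m, bb⟩ :=
      Submodule.basisOfPid (Pi.basisFun (Polynomial K) (Fin p)) (LinearMap.range f)
    let e := LinearEquiv.ofInjective f hfinj
    let b : Module.Basis (Fin m) (Polynomial K) (leftNullMod M) := bb.map e.symm
    haveI : Module.Finite (Polynomial K) (leftNullMod M) := Module.Finite.of_basis b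
    have hmp : m ≤ p := by
      have hli : LinearIndependent (Polynomial K)
          (fun i => ((bb i : Fin p → Polynomial K))) :=
        bb.linearIndependent.map' (Submodule.subtype _) (Submodule.ker_subtype _)
      have h2 := hli.fintype_card_le_finrank
      simpa [Module.finrank_pi] using h2
    have hpm : p ≤ m := by
      have hli : LinearIndependent (Polynomial K)
          (fun i => (⟨N i, hrowmem i⟩ : leftNullMod M)) := by
        apply LinearIndependent.of_comp (Submodule.subtype (leftNullMod M))
        exact hindep
      have h2 := hli.fintype_card_le_finrank
      simpa [Module.finrank_eq_card_basis b] using h2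
    let b' : Module.Basis (Fin p) (Polynomial K) (leftNullMod M) :=
      b.reindex (finCongr (le_antisymm hmp hpm))
    let B : Matrix (Fin p) (Fin n ⊕ Fin p) (Polynomial K) :=
      Matrix.of fun i => (b' i : (Fin n ⊕ Fin p) → Polynomial K)
    let W : Matrix (Fin p) (Fin p) (Polynomial K) :=
      Matrix.of fun i j => b'.repr ⟨N i, hrowmem i⟩ j
    have hcoe : ∀ x : leftNullMod M,
        (x : (Fin n ⊕ Fin p) → Polynomial K) = ∑ j, b'.repr x j • B j := by
      intro x
      conv_lhs => rw [← b'.sum_repr x]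
      simp only [Submodule.coe_sum, SetLike.val_smul]
      rfl
    have hNWB : ∀ i, N i = ∑ j, W i j • B j := fun i => hcoe ⟨N i, hrowmem i⟩
    have hNmat : N = W * B := by
      funext i k
      have h1 := congrFun (hNWB i) k
      simpa [Matrix.mul_apply, Finset.sum_apply] using h1
    have hST : S = W * Matrix.of (fun i j => B i (Sum.inr j)) := by
      funext i j
      have h1 := congrFun (congrFun hNmat i) (Sum.inr j)
      simpa [Matrix.mul_apply, N, Matrix.fromCols_apply_inr] using h1
    have hNpB : Np = W * Matrix.of (fun i j => B i (Sum.inl j)) := by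
      funext i j
      have h1 := congrFun (congrFun hNmat i) (Sum.inl j)
      simpa [Matrix.mul_apply, N, Matrix.fromCols_apply_inl] using h1
    have hdetW : W.det ≠ 0 := by
      intro h0
      apply hS
      rw [hST, Matrix.det_mul, h0, zero_mul]
    have hWu : IsUnit W.det := hcop W hdetW ⟨_, hST⟩ ⟨_, hNpB⟩
    have hBW : B = W⁻¹ * N := by
      rw [hNmat, ← Matrix.mul_assoc, Matrix.nonsing_inv_mul W hWu, Matrix.one_mul]
    have hBmem : ∀ j, B j ∈ Submodule.span (Polynomial K) (Set.range fun i => N i) := by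
      intro j
      have h1 : B j = ∑ i, W⁻¹ j i • N i := by
        funext k
        have h2 := congrFun (congrFun hBW j) k
        simpa [Matrix.mul_apply, Finset.sum_apply] using h2
      rw [h1]
      exact Submodule.sum_mem _ fun i _ =>
        Submodule.smul_mem _ _ (Submodule.subset_span ⟨i, rfl⟩)
    refine ⟨hindep, le_antisymm ?_ ?_⟩
    · rw [Submodule.span_le]
      rintro x ⟨i, rfl⟩
      exact hrowmem i
    · intro v hv
      rw [show v = ∑ j, b'.repr ⟨v, hv⟩ j • B j from hcoe ⟨v, hv⟩]
      exact Submodule.sum_mem _ fun j _ => Submodule.smul_mem _ _ (hBmem j)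


end PolyNull
end

section
/- Let K be a field and H a p×n matrix over the field of rational functions K(x). Let P_H denote the K[x]-module of row vectors u ∈ K[x]^p such that uH ∈ K[x]^n. Let S ∈ K[x]^{p×p} be non-singular and N ∈ K[x]^{p×n} with S^{-1}N = H. Then S^{-1}N is an irreducible (coprime) matrix fraction description of H if and only if the rows of S form a basis of P_H. -/
open Polynomial Matrix

namespace PolyNull

variable {K : Type*} [Field K]

/-- The `K[x]`-module `P_H` of polynomial row vectors `u` such that `u • H` is polynomial
(entrywise in the image of `K[x]` inside `K(x)`). -/
noncomputable def PH {p n : Type*} [Fintype p] (H : Matrix p n (RatFunc K)) :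
    Submodule (Polynomial K) (p → Polynomial K) where
  carrier := {u | ∀ j, ∑ i, algebraMap (Polynomial K) (RatFunc K) (u i) * H i j
      ∈ Set.range (algebraMap (Polynomial K) (RatFunc K))}
  zero_mem' := by
    intro j
    refine ⟨0, ?_⟩
    simp
  add_mem' := by
    intro a b ha hb j
    obtain ⟨qa, hqa⟩ := ha j
    obtain ⟨qb, hqb⟩ := hb j
    refine ⟨qa + qb, ?_⟩
    simp only [Pi.add_apply, map_add, add_mul, Finset.sum_add_distrib]
    rw [hqa, hqb]
  smul_mem' := by
    intro c u hu j
    obtain ⟨qa, hqa⟩ := hu j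
    refine ⟨c * qa, ?_⟩
    simp only [Pi.smul_apply, smul_eq_mul, _root_.map_mul, mul_assoc, ← Finset.mul_sum]
    rw [hqa]


lemma ratMat_mul {m n o : Type*} [Fintype n] (A : Matrix m n (Polynomial K))
    (B : Matrix n o (Polynomial K)) : ratMat (A * B) = ratMat A * ratMat B :=
  Matrix.map_mul

lemma ratMat_injective {m n : Type*} :
    Function.Injective (ratMat (K := K) (m := m) (n := n)) := by
  intro A B h
  funext i j
  exact IsFractionRing.injective (Polynomial K) (RatFunc K) (congrFun (congrFun h i) j)

lemma rows_li_of_det_ne_zero {p : Type*} [Fintype p] [DecidableEq p]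
    (S : Matrix p p (Polynomial K)) (hS : S.det ≠ 0) :
    LinearIndependent (Polynomial K) (fun i => S i) := by
  rw [Fintype.linearIndependent_iff]
  intro c hc i
  have h0 : c ᵥ* S = 0 := by
    funext j
    have := congrFun hc j
    simpa [vecMul, dotProduct, Finset.sum_apply] using this
  have h1 : c ᵥ* (S * S.adjugate) = 0 := by
    rw [← vecMul_vecMul, h0, zero_vecMul]
  rw [Matrix.mul_adjugate] at h1
  have := congrFun h1 i
  simp [vecMul, dotProduct, Matrix.one_apply, mul_comm] at this
  rcases this with h | h
  · exact h
  · exact absurd h hS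

lemma mul_right_cancel_of_det_ne_zero {p : Type*} [Fintype p] [DecidableEq p]
    {R : Type*} [CommRing R] [IsDomain R] {A B S : Matrix p p R} (hS : S.det ≠ 0)
    (h : A * S = B * S) : A = B := by
  have h2 : A * (S * S.adjugate) = B * (S * S.adjugate) := by
    rw [← Matrix.mul_assoc, ← Matrix.mul_assoc, h]
  rw [Matrix.mul_adjugate] at h2
  funext i j
  have h3 := congrFun (congrFun h2 i) j
  simp only [Matrix.mul_smul, Matrix.mul_one, Matrix.smul_apply, smul_eq_mul] at h3
  exact mul_left_cancel₀ hS h3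

/-- `S⁻¹N = H` is a coprime left matrix fraction description of `H`
iff the rows of `S` form a basis of the module `P_H` of polynomial row vectors `u`
with `u H` polynomial. -/
theorem coprime_iff_denominator_basis
    {p n : ℕ} (H : Matrix (Fin p) (Fin n) (RatFunc K))
    (S : Matrix (Fin p) (Fin p) (Polynomial K))
    (N : Matrix (Fin p) (Fin n) (Polynomial K))
    (hS : S.det ≠ 0) (hfrac : ratMat S * H = ratMat N) :
    LeftCoprime S N ↔
      (LinearIndependent (Polynomial K) (fun i => S i) ∧
        Submodule.span (Polynomial K) (Set.range fun i => S i) = PH H) := by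
  classical
  have hSrow : ∀ i, S i ∈ PH H := by
    intro i j
    refine ⟨N i j, ?_⟩
    have := congrFun (congrFun hfrac i) j
    simpa [ratMat, Matrix.mul_apply] using this.symm
  have hLI : LinearIndependent (Polynomial K) (fun i => S i) :=
    rows_li_of_det_ne_zero S hS
  constructor
  · intro hcop
    refine ⟨hLI, ?_⟩
    obtain ⟨m, b⟩ := Submodule.basisOfPid (Pi.basisFun (Polynomial K) (Fin p)) (PH H)
    have hmp : m ≤ p := by
      have := (Pi.basisFun (Polynomial K) (Fin p)).card_le_card_of_linearIndependent
        (b.linearIndependent.map' (PH H).subtype (Submodule.ker_subtype _))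
      simpa using this
    have hpm : p ≤ m := by
      have hv : LinearIndependent (Polynomial K) (fun i => (⟨S i, hSrow i⟩ : PH H)) :=
        LinearIndependent.of_comp (PH H).subtype (by exact hLI)
      have := b.card_le_card_of_linearIndependent hv
      simpa using this
    have hm : m = p := le_antisymm hmp hpm
    let b' : Module.Basis (Fin p) (Polynomial K) (PH H) := b.reindex (finCongr hm)
    set T : Matrix (Fin p) (Fin p) (Polynomial K) := fun i => (b' i : Fin p → Polynomial K)
      with hTdef
    set W : Matrix (Fin p) (Fin p) (Polynomial K) := fun i j => b'.repr ⟨S i, hSrow i⟩ j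
      with hWdef
    have hSWT : S = W * T := by
      funext i k
      have h2 : ((∑ j, b'.repr ⟨S i, hSrow i⟩ j • b' j : PH H) : Fin p → Polynomial K) = S i := by
        rw [b'.sum_repr]
      have h3 := congrFun h2 k
      simp only [AddSubmonoidClass.coe_finset_sum, SetLike.val_smul, Finset.sum_apply,
        Pi.smul_apply, smul_eq_mul] at h3
      rw [Matrix.mul_apply]
      exact h3.symm
    have hmem : ∀ k j, ∑ i, algebraMap (Polynomial K) (RatFunc K) (T k i) * H i j
        ∈ Set.range (algebraMap (Polynomial K) (RatFunc K)) := fun k j => (b' k).2 j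
    choose N0 hN0 using hmem
    have hTH : ratMat T * H = ratMat (Matrix.of N0) := by
      funext k j
      rw [Matrix.mul_apply]
      simp only [ratMat, Matrix.map_apply, Matrix.of_apply]
      exact (hN0 k j).symm
    have hNW : N = W * Matrix.of N0 := by
      apply ratMat_injective
      rw [ratMat_mul, ← hTH, ← Matrix.mul_assoc, ← ratMat_mul, ← hSWT, hfrac]
    have hWdet' : W.det ≠ 0 := fun h => hS (by rw [hSWT, Matrix.det_mul, h, zero_mul])
    have hu : IsUnit W.det := hcop W hWdet' ⟨T, hSWT⟩ ⟨Matrix.of N0, hNW⟩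
    have hTW : T = W⁻¹ * S := by
      rw [hSWT, ← Matrix.mul_assoc, Matrix.nonsing_inv_mul _ hu, one_mul]
    apply le_antisymm
    · rw [Submodule.span_le]
      rintro _ ⟨i, rfl⟩
      exact hSrow i
    · intro u hu'
      have hrepr : ((∑ j, b'.repr ⟨u, hu'⟩ j • b' j : PH H) : Fin p → Polynomial K) = u := by
        rw [b'.sum_repr]
      have hTj : ∀ j, T j ∈ Submodule.span (Polynomial K) (Set.range fun i => S i) := by
        intro j
        have hTj2 : T j = ∑ i, W⁻¹ j i • S i := by
          funext k
          rw [hTW]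
          simp [Matrix.mul_apply, Finset.sum_apply]
        rw [hTj2]
        exact Submodule.sum_mem _ fun i _ =>
          Submodule.smul_mem _ _ (Submodule.subset_span ⟨i, rfl⟩)
      rw [← hrepr]
      push_cast
      refine Submodule.sum_mem _ fun j _ => Submodule.smul_mem _ _ (hTj j)
  · rintro ⟨-, hspan⟩ U hU hexS hexN
    obtain ⟨S', hS'⟩ := hexS
    obtain ⟨N', hN'⟩ : ∃ N' : Matrix (Fin p) (Fin n) (Polynomial K), N = U * N' := hexN
    have hdeteq : (ratMat U).det = algebraMap (Polynomial K) (RatFunc K) U.det := by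
      show (U.map (algebraMap (Polynomial K) (RatFunc K))).det = _
      rw [← RingHom.mapMatrix_apply, ← RingHom.map_det]
    have hdet : IsUnit (ratMat U).det := by
      rw [hdeteq, isUnit_iff_ne_zero]
      exact (map_ne_zero_iff _ (IsFractionRing.injective (Polynomial K) (RatFunc K))).mpr hU
    have hcancel : ratMat S' * H = ratMat N' := by
      have h1 : ratMat U * (ratMat S' * H) = ratMat U * ratMat N' := by
        rw [← Matrix.mul_assoc, ← ratMat_mul, ← hS', hfrac, ← ratMat_mul, ← hN']
      calc ratMat S' * H = (ratMat U)⁻¹ * (ratMat U * (ratMat S' * H)) := by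
            rw [← Matrix.mul_assoc, Matrix.nonsing_inv_mul _ hdet, Matrix.one_mul]
        _ = (ratMat U)⁻¹ * (ratMat U * ratMat N') := by rw [h1]
        _ = ratMat N' := by rw [← Matrix.mul_assoc, Matrix.nonsing_inv_mul _ hdet, Matrix.one_mul]
    have hrow : ∀ k, S' k ∈ PH H := by
      intro k j
      refine ⟨N' k j, ?_⟩
      have := congrFun (congrFun hcancel k) j
      simpa [ratMat, Matrix.mul_apply] using this.symm
    have hV : ∀ k, ∃ c : Fin p → Polynomial K, ∑ i, c i • S i = S' k := by
      intro k
      have hk := hrow k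
      rw [← hspan] at hk
      exact (Submodule.mem_span_range_iff_exists_fun _).mp hk
    choose V hVc using hV
    have hS'VS : S' = Matrix.of V * S := by
      funext k j
      have hkj := congrFun (hVc k) j
      simp only [Finset.sum_apply, Pi.smul_apply, smul_eq_mul] at hkj
      rw [Matrix.mul_apply]
      exact hkj.symm
    have hUV : U * Matrix.of V = 1 := by
      apply mul_right_cancel_of_det_ne_zero hS
      rw [one_mul, Matrix.mul_assoc, ← hS'VS, ← hS']
    exact IsUnit.of_mul_eq_one (a := U.det) (Matrix.of V).det
      (by rw [← Matrix.det_mul, hUV, Matrix.det_one])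


end PolyNull
end

section
/- Let K be a sufficiently large field and M ∈ K[x]^{(n+p)×n} of rank n. Then there exists a constant matrix Q ∈ K^{(n+p)×(n+p)} such that the McMillan degree of the top n×n submatrix of QM equals the McMillan degree of QM (which equals that of M). Furthermore, for such a Q, if N ∈ K[x]^{p×(n+p)} is a minimal basis of the left nullspace module of QM, then the submatrix S = N_{·, n+1..n+p} ∈ K[x]^{p×p} formed by the last p columns of N is row-reduced, with row degrees equal to the Kronecker indices δ₁, …, δ_p of QM. -/
open Polynomial Matrix

namespace PolyNull

variable {K : Type*} [Field K]

/-! ### Auxiliary lemmas -/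

lemma le_vecDeg {m : Type*} [Fintype m] (v : m → Polynomial K) (i : m) :
    (v i).natDegree ≤ vecDeg v := by
  unfold vecDeg; exact Finset.le_sup (f := fun i => (v i).natDegree) (Finset.mem_univ i)

lemma vecDeg_le {m : Type*} [Fintype m] {v : m → Polynomial K} {d : ℕ}
    (h : ∀ i, (v i).natDegree ≤ d) : vecDeg v ≤ d := by
  unfold vecDeg; exact Finset.sup_le fun i _ => h i

lemma vecMul_adjugate {α : Type*} [CommRing α] {n : Type*} [DecidableEq n] [Fintype n]
    (T : Matrix n n α) (b : n → α) (j : n) :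
    (b ᵥ* adjugate T) j = (T.updateRow j b).det := by
  have h2 : ∀ k : n, b k * cramer Tᵀ (Pi.single k 1) j = cramer Tᵀ (Pi.single k (b k)) j := by
    intro k
    have hs : (Pi.single k (b k) : n → α) = b k • (Pi.single k 1 : n → α) := by
      ext l
      by_cases h : l = k <;> simp [Pi.single_apply, h]
    rw [hs, LinearMap.map_smul]
    simp
  have h1 : (b ᵥ* adjugate T) j = ∑ k, b k * cramer Tᵀ (Pi.single k 1) j := by
    simp [vecMul, dotProduct, adjugate_def]
  have h4 := map_sum (cramer Tᵀ) (fun k => (Pi.single k (b k) : n → α)) Finset.univ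
  rw [Finset.univ_sum_single b] at h4
  have h3 : ∑ k, cramer Tᵀ (Pi.single k (b k)) j = cramer Tᵀ b j := by
    rw [h4]
    simp
  rw [h1]
  simp_rw [h2]
  rw [h3, cramer_apply, updateCol_transpose, det_transpose]

lemma null_ident {n p : ℕ} (A : Matrix (Fin n ⊕ Fin p) (Fin n) (Polynomial K))
    (v : Fin n ⊕ Fin p → Polynomial K) (hv : v ∈ leftNullMod A) (j : Fin n) :
    (A.submatrix Sum.inl id).det * v (Sum.inl j)
      = -∑ i, v (Sum.inr i) *
          ((A.submatrix Sum.inl id).updateRow j (fun k => A (Sum.inr i) k)).det := by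
  set T := A.submatrix (Sum.inl : Fin n → Fin n ⊕ Fin p) id with hT
  set B := A.submatrix (Sum.inr : Fin p → Fin n ⊕ Fin p) id with hB
  set u : Fin n → Polynomial K := fun k => v (Sum.inl k) with hu
  set w : Fin p → Polynomial K := fun i => v (Sum.inr i) with hw
  have hker : v ᵥ* A = 0 := hv
  have hsplit : u ᵥ* T + w ᵥ* B = 0 := by
    funext j0
    have h0 := congrFun hker j0
    simp only [vecMul, dotProduct, Fintype.sum_sum_type, Pi.zero_apply] at h0
    simpa [vecMul, dotProduct, hT, hB, hu, hw] using h0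
  have h5 : (u ᵥ* T) ᵥ* adjugate T + (w ᵥ* B) ᵥ* adjugate T = 0 := by
    rw [← Matrix.add_vecMul, hsplit, Matrix.zero_vecMul]
  have h6 : (u ᵥ* T) ᵥ* adjugate T = fun k => T.det * u k := by
    rw [Matrix.vecMul_vecMul, mul_adjugate]
    ext k
    simp [vecMul, dotProduct, Matrix.one_apply, mul_ite, mul_comm]
  have h7 : T.det * u j = -((w ᵥ* B) ᵥ* adjugate T) j := by
    have h9 := congrFun h5 j
    simp only [Pi.add_apply, Pi.zero_apply] at h9
    rw [congrFun h6 j] at h9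
    exact eq_neg_of_add_eq_zero_left h9
  rw [h7, Matrix.vecMul_vecMul]
  have h8 : (w ᵥ* (B * adjugate T)) j = ∑ i, w i * (T.updateRow j (B i)).det := by
    simp only [vecMul, dotProduct, Matrix.mul_apply]
    congr 1
    ext i
    have : ∑ k, B i k * adjugate T k j = ((B i) ᵥ* adjugate T) j := by
      simp [vecMul, dotProduct]
    rw [this, vecMul_adjugate]
  rw [h8]
  congr 1

lemma null_row_deg_le {n p : ℕ} (A : Matrix (Fin n ⊕ Fin p) (Fin n) (Polynomial K))
    (hTdet : (A.submatrix Sum.inl id).det ≠ 0)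
    (hmax : ∀ h : Fin n → Fin n ⊕ Fin p, Function.Injective h →
      ((A.submatrix h id).det).natDegree ≤ ((A.submatrix Sum.inl id).det).natDegree)
    (v : Fin n ⊕ Fin p → Polynomial K) (hv : v ∈ leftNullMod A) (j : Fin n) :
    (v (Sum.inl j)).natDegree ≤ vecDeg (fun i => v (Sum.inr i)) := by
  by_cases hz : v (Sum.inl j) = 0
  · simp [hz]
  set T := A.submatrix (Sum.inl : Fin n → Fin n ⊕ Fin p) id with hT
  have hid := null_ident A v hv j
  have hterm : ∀ i : Fin p,
      (v (Sum.inr i) * (T.updateRow j (fun k => A (Sum.inr i) k)).det).natDegree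
        ≤ vecDeg (fun i => v (Sum.inr i)) + T.det.natDegree := by
    intro i
    have h1 : (v (Sum.inr i)).natDegree ≤ vecDeg (fun i => v (Sum.inr i)) :=
      le_vecDeg (fun i => v (Sum.inr i)) i
    have hsub : T.updateRow j (fun k => A (Sum.inr i) k)
        = A.submatrix (fun k => if k = j then Sum.inr i else Sum.inl k) id := by
      ext k l
      rw [Matrix.updateRow_apply]
      by_cases hk : k = j <;> simp [hk, hT]
    have hinj : Function.Injective (fun k => if k = j then Sum.inr i else Sum.inl k :
        Fin n → Fin n ⊕ Fin p) := by
      intro k1 k2 hk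
      by_cases h1 : k1 = j <;> by_cases h2 : k2 = j <;> simp [h1, h2] at hk <;>
        first | (exact h1.trans h2.symm) | exact hk
    have h2 : (T.updateRow j (fun k => A (Sum.inr i) k)).det.natDegree ≤ T.det.natDegree := by
      rw [hsub]; exact hmax _ hinj
    calc (v (Sum.inr i) * (T.updateRow j (fun k => A (Sum.inr i) k)).det).natDegree
        ≤ (v (Sum.inr i)).natDegree
            + (T.updateRow j (fun k => A (Sum.inr i) k)).det.natDegree := natDegree_mul_le
      _ ≤ vecDeg (fun i => v (Sum.inr i)) + T.det.natDegree := Nat.add_le_add h1 h2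
  have hsum : (T.det * v (Sum.inl j)).natDegree
      ≤ vecDeg (fun i => v (Sum.inr i)) + T.det.natDegree := by
    rw [hid, natDegree_neg]
    exact (natDegree_sum_le_of_forall_le _ _ fun i _ => hterm i)
  rw [natDegree_mul hTdet hz] at hsum
  omega

lemma null_inr_zero {n p : ℕ} (A : Matrix (Fin n ⊕ Fin p) (Fin n) (Polynomial K))
    (hTdet : (A.submatrix Sum.inl id).det ≠ 0)
    (v : Fin n ⊕ Fin p → Polynomial K) (hv : v ∈ leftNullMod A)
    (hw : ∀ i, v (Sum.inr i) = 0) : v = 0 := by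
  funext s
  cases s with
  | inl j =>
    have hid := null_ident A v hv j
    simp only [hw, zero_mul, Finset.sum_const_zero, neg_zero] at hid
    have := mul_eq_zero.mp hid
    tauto
  | inr i => exact hw i

lemma null_vecDeg_eq {n p : ℕ} (A : Matrix (Fin n ⊕ Fin p) (Fin n) (Polynomial K))
    (hTdet : (A.submatrix Sum.inl id).det ≠ 0)
    (hmax : ∀ h : Fin n → Fin n ⊕ Fin p, Function.Injective h →
      ((A.submatrix h id).det).natDegree ≤ ((A.submatrix Sum.inl id).det).natDegree)
    (v : Fin n ⊕ Fin p → Polynomial K) (hv : v ∈ leftNullMod A) :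
    vecDeg (fun i => v (Sum.inr i)) = vecDeg v := by
  apply le_antisymm
  · exact vecDeg_le fun i => le_vecDeg v (Sum.inr i)
  · refine vecDeg_le fun s => ?_
    cases s with
    | inl j => exact null_row_deg_le A hTdet hmax v hv j
    | inr i => exact le_vecDeg (fun i => v (Sum.inr i)) i

lemma exists_nonsing_rows {n p : ℕ} (M : Matrix (Fin n ⊕ Fin p) (Fin n) (Polynomial K))
    (hrank : polyRank M = n) :
    ∃ f : Fin n → Fin n ⊕ Fin p, Function.Injective f ∧ (M.submatrix f id).det ≠ 0 := by
  classical
  set F := RatFunc K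
  set M' := ratMat M with hM'
  have h1 : (M'ᵀ).rank = n := by rw [Matrix.rank_transpose]; exact hrank
  have h2 : LinearMap.range (M'ᵀ).mulVecLin = Submodule.span F (Set.range M') := by
    rw [Matrix.range_mulVecLin]; rfl
  have h3 : Module.finrank F ↥(Submodule.span F (Set.range M')) = n := by
    rw [← h2]; exact h1
  have h4 : Submodule.span F (Set.range M') = ⊤ := by
    apply Submodule.eq_top_of_finrank_eq
    rw [h3]; exact (Module.finrank_fin_fun F).symm
  obtain ⟨b, hbsub, hbspan, hbind⟩ := exists_linearIndependent F (Set.range M')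
  rw [h4] at hbspan
  have hbtop : ⊤ ≤ Submodule.span F (Set.range ((↑) : b → (Fin n → F))) := by
    rw [Subtype.range_coe]; exact hbspan.ge
  let basisB : Module.Basis b F (Fin n → F) := Module.Basis.mk hbind hbtop
  haveI : Fintype b := FiniteDimensional.fintypeBasisIndex basisB
  have hcard : Fintype.card b = n := by
    have := Module.finrank_eq_card_basis basisB
    exact this.symm.trans (Module.finrank_fin_fun F)
  let e : Fin n ≃ b := (Fintype.equivFinOfCardEq hcard).symm
  have hchoice : ∀ x : b, ∃ k, M' k = (x : Fin n → F) := fun x => hbsub x.2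
  choose g hg using hchoice
  refine ⟨fun a => g (e a), ?_, ?_⟩
  · intro a a' h
    simp only at h
    have h2 : ((e a : b) : Fin n → F) = ((e a' : b) : Fin n → F) := by
      rw [← hg (e a), ← hg (e a')]; exact congrArg M' h
    exact e.injective (Subtype.ext h2)
  · have hrows : LinearIndependent F (fun a : Fin n => (M'.submatrix (fun a => g (e a)) id) a) := by
      have : (fun a : Fin n => (M'.submatrix (fun a => g (e a)) id) a)
          = fun a : Fin n => ((e a : b) : Fin n → F) := by
        funext a; funext j
        simp [Matrix.submatrix_apply, hg (e a)]
      rw [this]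
      exact hbind.comp (fun a => e a) (fun a a' h => e.injective h)
    have hunit : IsUnit (M'.submatrix (fun a => g (e a)) id) :=
      Matrix.linearIndependent_rows_iff_isUnit.mp hrows
    have hdetF : (M'.submatrix (fun a => g (e a)) id).det ≠ 0 := by
      have := (Matrix.isUnit_iff_isUnit_det _).mp hunit
      exact this.ne_zero
    intro hdet0
    apply hdetF
    have hmap : (M'.submatrix (fun a => g (e a)) id)
        = (M.submatrix (fun a => g (e a)) id).map (algebraMap (Polynomial K) F) := by
      ext i j; simp [hM', ratMat]; rfl
    rw [hmap, ← RingHom.mapMatrix_apply, ← RingHom.map_det, hdet0, map_zero]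

lemma exists_perm_extend {n p : ℕ} (f : Fin n → Fin n ⊕ Fin p) (hf : Function.Injective f) :
    ∃ σ : Equiv.Perm (Fin n ⊕ Fin p), ∀ k, σ (Sum.inl k) = f k := by
  classical
  set P : Fin n ⊕ Fin p → Prop := fun x => x ∈ Set.range (Sum.inl : Fin n → Fin n ⊕ Fin p)
    with hP
  set Q : Fin n ⊕ Fin p → Prop := fun x => x ∈ Set.range f with hQ
  let e : {x // P x} ≃ {x // Q x} :=
    (Equiv.ofInjective _ (Sum.inl_injective)).symm.trans (Equiv.ofInjective f hf)
  have hcard : Fintype.card {x // ¬ P x} = Fintype.card {x // ¬ Q x} := by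
    have h1 : Fintype.card {x // P x} = n := by
      rw [Fintype.card_congr (Equiv.ofInjective _ (Sum.inl_injective :
        Function.Injective (Sum.inl : Fin n → Fin n ⊕ Fin p))).symm, Fintype.card_fin]
    have h2 : Fintype.card {x // Q x} = n := by
      rw [Fintype.card_congr (Equiv.ofInjective f hf).symm, Fintype.card_fin]
    rw [Fintype.card_subtype_compl, Fintype.card_subtype_compl, h1, h2]
  let ec : {x // ¬ P x} ≃ {x // ¬ Q x} := Fintype.equivOfCardEq hcard
  refine ⟨Equiv.subtypeCongr e ec, fun k => ?_⟩
  have hPk : P (Sum.inl k) := ⟨k, rfl⟩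
  have : Equiv.subtypeCongr e ec (Sum.inl k) = (e ⟨Sum.inl k, hPk⟩ : Fin n ⊕ Fin p) := by
    simp [Equiv.subtypeCongr, hPk]
  rw [this]
  show ((Equiv.ofInjective f hf) ((Equiv.ofInjective _ Sum.inl_injective).symm
    ⟨Sum.inl k, hPk⟩) : Fin n ⊕ Fin p) = f k
  have : (Equiv.ofInjective _ (Sum.inl_injective : Function.Injective
      (Sum.inl : Fin n → Fin n ⊕ Fin p))).symm ⟨Sum.inl k, hPk⟩ = k := by
    exact Equiv.ofInjective_symm_apply _ k
  rw [this]
  simp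

open scoped Classical in
lemma mcMillanDeg_def {m n : Type*} [Fintype m] [Fintype n]
    (M : Matrix m n (Polynomial K)) (r : ℕ) :
    mcMillanDeg M r = Finset.univ.sup fun fg : (Fin r → m) × (Fin r → n) =>
      if Function.Injective fg.1 ∧ Function.Injective fg.2 then
        (M.submatrix fg.1 fg.2).det.natDegree
      else 0 := rfl

lemma natDegree_sign_mul {α : Type*} [DecidableEq α] [Fintype α] {σ : Equiv.Perm α}
    (q : Polynomial K) :
    ((((Equiv.Perm.sign σ : ℤˣ) : ℤ) : Polynomial K) * q).natDegree = q.natDegree := by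
  rcases Int.units_eq_one_or (Equiv.Perm.sign σ) with h | h <;>
    simp [h, natDegree_neg]

lemma minor_natDegree_eq {m : Type*} [Fintype m] {r : ℕ} (M : Matrix m (Fin r) (Polynomial K))
    (f : Fin r → m) (g : Fin r → Fin r) (hg : Function.Injective g) :
    (M.submatrix f g).det.natDegree = (M.submatrix f id).det.natDegree := by
  have hgbij : Function.Bijective g := (Finite.injective_iff_bijective).mp hg
  let gE := Equiv.ofBijective g hgbij
  have h1 : M.submatrix f g = (M.submatrix f id).submatrix id gE := by
    ext i j; simp [gE, Equiv.ofBijective]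
  rw [h1, Matrix.det_permute' gE]
  exact natDegree_sign_mul _

open scoped Classical in
lemma mcMillanDeg_le {m : Type*} [Fintype m] {r : ℕ}
    (M : Matrix m (Fin r) (Polynomial K)) {D : ℕ}
    (h : ∀ f : Fin r → m, Function.Injective f → (M.submatrix f id).det.natDegree ≤ D) :
    mcMillanDeg M r ≤ D := by
  rw [mcMillanDeg_def]
  refine Finset.sup_le fun fg _ => ?_
  split_ifs with hfg
  · rw [minor_natDegree_eq M fg.1 fg.2 hfg.2]
    exact h fg.1 hfg.1
  · exact Nat.zero_le _

open scoped Classical in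
lemma le_mcMillanDeg {m : Type*} [Fintype m] {r : ℕ}
    (M : Matrix m (Fin r) (Polynomial K))
    (f : Fin r → m) (hf : Function.Injective f) :
    (M.submatrix f id).det.natDegree ≤ mcMillanDeg M r := by
  rw [mcMillanDeg_def]
  refine le_trans ?_ (Finset.le_sup (Finset.mem_univ (f, (id : Fin r → Fin r))))
  rw [if_pos (⟨hf, Function.injective_id⟩ :
      Function.Injective f ∧ Function.Injective (id : Fin r → Fin r))]

lemma mcMillanDeg_eq_of_max {m : Type*} [Fintype m] {r : ℕ}
    (M : Matrix m (Fin r) (Polynomial K)) (f₀ : Fin r → m) (hf₀ : Function.Injective f₀)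
    (hmax : ∀ f : Fin r → m, Function.Injective f →
      (M.submatrix f id).det.natDegree ≤ (M.submatrix f₀ id).det.natDegree) :
    mcMillanDeg M r = (M.submatrix f₀ id).det.natDegree :=
  le_antisymm (mcMillanDeg_le M hmax) (le_mcMillanDeg M f₀ hf₀)

lemma mcMillanDeg_square {r : ℕ} (T : Matrix (Fin r) (Fin r) (Polynomial K)) :
    mcMillanDeg T r = T.det.natDegree := by
  have hTid : T.submatrix id id = T := by ext i j; simp
  refine (mcMillanDeg_eq_of_max T id Function.injective_id ?_).trans (by rw [hTid])
  intro f hf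
  rw [hTid]
  have hfbij := (Finite.injective_iff_bijective).mp hf
  have h1 : T.submatrix f id = T.submatrix (Equiv.ofBijective f hfbij) id := rfl
  rw [h1, Matrix.det_permute (Equiv.ofBijective f hfbij) T, natDegree_sign_mul]

lemma mcMillanDeg_perm {m : Type*} [Fintype m] [DecidableEq m] {r : ℕ}
    (M : Matrix m (Fin r) (Polynomial K)) (σ : Equiv.Perm m) :
    mcMillanDeg (M.submatrix σ id) r = mcMillanDeg M r := by
  have key : ∀ (N : Matrix m (Fin r) (Polynomial K)) (τ : Equiv.Perm m),
      mcMillanDeg (N.submatrix τ id) r ≤ mcMillanDeg N r := by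
    intro N τ
    refine mcMillanDeg_le _ fun f hf => ?_
    have h1 : (N.submatrix τ id).submatrix f id = N.submatrix (τ ∘ f) id := by
      ext i j; simp
    rw [h1]
    exact le_mcMillanDeg N (τ ∘ f) (τ.injective.comp hf)
  refine le_antisymm (key M σ) ?_
  have h2 : M = (M.submatrix σ id).submatrix σ.symm id := by
    ext i j; simp
  calc mcMillanDeg M r = mcMillanDeg ((M.submatrix σ id).submatrix σ.symm id) r := by rw [← h2]
    _ ≤ mcMillanDeg (M.submatrix σ id) r := key _ σ.symm

lemma permMatrix_mul {m n' : Type*} [Fintype m] [DecidableEq m]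
    (σ : Equiv.Perm m) (M : Matrix m n' (Polynomial K)) :
    ((Matrix.of fun a b => if b = σ a then (1:K) else 0).map Polynomial.C) * M
      = M.submatrix σ id := by
  ext a j
  simp only [Matrix.mul_apply, Matrix.map_apply, Matrix.of_apply, Matrix.submatrix_apply, id]
  rw [Finset.sum_eq_single (σ a)]
  · simp
  · intro b _ hb
    simp [hb]
  · intro h
    exact absurd (Finset.mem_univ _) h

lemma minimal_basis_conclusion {n p : ℕ}
    (A : Matrix (Fin n ⊕ Fin p) (Fin n) (Polynomial K))
    (hTdet : (A.submatrix Sum.inl id).det ≠ 0)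
    (hmax : ∀ h : Fin n → Fin n ⊕ Fin p, Function.Injective h →
      ((A.submatrix h id).det).natDegree ≤ ((A.submatrix Sum.inl id).det).natDegree)
    (N : Fin p → (Fin n ⊕ Fin p → Polynomial K))
    (hmin : IsMinimalNullBasis A N) :
    IsRowReduced (Matrix.of fun i j => N i (Sum.inr j)) ∧
      ∀ i, vecDeg (fun j => N i (Sum.inr j)) = vecDeg (N i) := by
  classical
  obtain ⟨⟨hNind, hNspan⟩, hminimal⟩ := hmin
  have hNmem : ∀ i, N i ∈ leftNullMod A := fun i => by
    rw [← hNspan]; exact Submodule.subset_span ⟨i, rfl⟩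
  have hdeg : ∀ i, vecDeg (fun j => N i (Sum.inr j)) = vecDeg (N i) :=
    fun i => null_vecDeg_eq A hTdet hmax (N i) (hNmem i)
  refine ⟨?_, hdeg⟩
  set S : Matrix (Fin p) (Fin p) (Polynomial K) := Matrix.of fun i j => N i (Sum.inr j) with hS
  set d : Fin p → ℕ := fun i => vecDeg (fun j => N i (Sum.inr j)) with hd
  set L : Matrix (Fin p) (Fin p) K := leadingRowMatrix S with hL
  have hLij : ∀ i j, L i j = (N i (Sum.inr j)).coeff (d i) := fun i j => rfl
  have hlind : LinearIndependent K (fun i => L i) := by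
    rw [Fintype.linearIndependent_iff]
    intro c hc
    by_contra hne
    push_neg at hne
    obtain ⟨i1, hi1⟩ := hne
    set I : Finset (Fin p) := Finset.univ.filter (fun i => c i ≠ 0) with hI
    have hIne : I.Nonempty := ⟨i1, by simp [hI, hi1]⟩
    obtain ⟨i0, hi0I, hi0max⟩ := Finset.exists_max_image I d hIne
    have hci0 : c i0 ≠ 0 := by
      rw [hI, Finset.mem_filter] at hi0I; exact hi0I.2
    set dM := d i0 with hdM
    have hdle : ∀ i, c i ≠ 0 → d i ≤ dM := fun i hi => hi0max i (by simp [hI, hi])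
    set e : Fin p → Polynomial K :=
      fun i => if c i ≠ 0 then Polynomial.C (c i) * X ^ (dM - d i) else 0 with he
    set v : (Fin n ⊕ Fin p) → Polynomial K := ∑ i, e i • N i with hv
    have hvmem : v ∈ leftNullMod A := by
      rw [hv]; exact Submodule.sum_mem _ fun i _ => Submodule.smul_mem _ _ (hNmem i)
    have hvapp : ∀ s, v s = ∑ i, e i * N i s := by
      intro s; rw [hv]; simp [Finset.sum_apply]
    have hei0 : e i0 = Polynomial.C (c i0) := by
      rw [he]; simp [hci0, hdM]
    have hterm_coeff : ∀ i j, (e i * N i (Sum.inr j)).coeff dM = c i * L i j := by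
      intro i j
      by_cases hci : c i ≠ 0
      · have hei : e i = Polynomial.C (c i) * X ^ (dM - d i) := by
          rw [he]; simp [hci]
        rw [hei]
        have h1 : Polynomial.C (c i) * X ^ (dM - d i) * N i (Sum.inr j)
            = Polynomial.C (c i) * (N i (Sum.inr j) * X ^ (dM - d i)) := by ring
        rw [h1, Polynomial.coeff_C_mul, hLij]
        congr 1
        set k := dM - d i with hk
        have h2 : dM = d i + k := by
          have := hdle i hci; omega
        rw [h2, Polynomial.coeff_mul_X_pow]
      · push_neg at hci
        have hei : e i = 0 := by rw [he]; simp [hci]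
        rw [hei, hci]
        simp
    have hwcoeff : ∀ j, (v (Sum.inr j)).coeff dM = 0 := by
      intro j
      rw [hvapp, Polynomial.finset_sum_coeff,
        Finset.sum_congr rfl (fun i _ => hterm_coeff i j)]
      have h0 := congrFun hc j
      simpa [Finset.sum_apply] using h0
    have hwdeg : ∀ j, (v (Sum.inr j)).natDegree ≤ dM := by
      intro j
      rw [hvapp]
      refine natDegree_sum_le_of_forall_le _ _ fun i _ => ?_
      by_cases hci : c i ≠ 0
      · have hei : e i = Polynomial.C (c i) * X ^ (dM - d i) := by
          rw [he]; simp [hci]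
        have h5 : (e i).natDegree ≤ dM - d i := by
          rw [hei]
          refine le_trans (natDegree_C_mul_le _ _) ?_
          rw [natDegree_X_pow]
        have h6 : (N i (Sum.inr j)).natDegree ≤ d i := by
          rw [hd]; exact le_vecDeg (fun j => N i (Sum.inr j)) j
        calc (e i * N i (Sum.inr j)).natDegree
            ≤ (e i).natDegree + (N i (Sum.inr j)).natDegree := natDegree_mul_le
          _ ≤ (dM - d i) + d i := Nat.add_le_add h5 h6
          _ = dM := by have := hdle i hci; omega
      · push_neg at hci
        have hei : e i = 0 := by rw [he]; simp [hci]
        simp [hei]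
    by_cases hwz : ∀ j, v (Sum.inr j) = 0
    · have hv0 : v = 0 := null_inr_zero A hTdet v hvmem hwz
      have hcomb : ∑ i, e i • N i = 0 := hv.symm.trans hv0
      have hz := Fintype.linearIndependent_iff.mp hNind e hcomb i0
      rw [hei0] at hz
      exact hci0 (Polynomial.C_eq_zero.mp hz)
    · push_neg at hwz
      obtain ⟨j0, hj0⟩ := hwz
      have hdM1 : 1 ≤ dM := by
        by_contra hlt
        have hz : dM = 0 := by omega
        apply hj0
        have h1 := hwdeg j0; rw [hz] at h1
        have h2 := hwcoeff j0; rw [hz] at h2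
        have h3 := Polynomial.eq_C_of_natDegree_le_zero h1
        rw [h3, h2, map_zero]
      have hwsmall : ∀ j, (v (Sum.inr j)).natDegree ≤ dM - 1 := by
        intro j
        by_cases hj : v (Sum.inr j) = 0
        · simp [hj]
        · have h1 := hwdeg j
          have h2 : (v (Sum.inr j)).natDegree ≠ dM := by
            intro hEq
            have h3 := Polynomial.leadingCoeff_ne_zero.mpr hj
            rw [Polynomial.leadingCoeff, hEq, hwcoeff j] at h3
            exact h3 rfl
          omega
      have hvdeg : vecDeg v ≤ dM - 1 := by
        rw [← null_vecDeg_eq A hTdet hmax v hvmem]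
        exact vecDeg_le hwsmall
      set N' := Function.update N i0 v with hN'
      have hN'basis : IsNullBasis A N' := by
        constructor
        · rw [Fintype.linearIndependent_iff]
          intro a ha
          have h1 : ∑ k, a k • N' k = a i0 • v + ∑ k ∈ Finset.univ.erase i0, a k • N k := by
            rw [← Finset.add_sum_erase _ (fun k => a k • N' k) (Finset.mem_univ i0)]
            congr 1
            · rw [hN', Function.update_self]
            · exact Finset.sum_congr rfl fun k hk => by
                rw [hN', Function.update_of_ne (Finset.ne_of_mem_erase hk)]
          have h2 : ∑ k, (a i0 * e k + if k = i0 then 0 else a k) • N k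
              = a i0 • v + ∑ k ∈ Finset.univ.erase i0, a k • N k := by
            simp_rw [add_smul]
            rw [Finset.sum_add_distrib]
            congr 1
            · rw [hv, Finset.smul_sum]
              exact Finset.sum_congr rfl fun k _ => mul_smul _ _ _
            · rw [← Finset.add_sum_erase _
                (fun k => (if k = i0 then (0 : Polynomial K) else a k) • N k)
                (Finset.mem_univ i0)]
              rw [if_pos rfl, zero_smul, zero_add]
              exact Finset.sum_congr rfl fun k hk => by
                rw [if_neg (Finset.ne_of_mem_erase hk)]
          rw [h1, ← h2] at ha
          have hall := Fintype.linearIndependent_iff.mp hNind _ ha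
          have hai0 : a i0 = 0 := by
            have h3 := hall i0
            rw [if_pos rfl, add_zero, hei0] at h3
            rcases mul_eq_zero.mp h3 with h4 | h4
            · exact h4
            · exact absurd (Polynomial.C_eq_zero.mp h4) hci0
          intro k
          by_cases hk : k = i0
          · rw [hk]; exact hai0
          · have h4 := hall k
            rw [if_neg hk, hai0, zero_mul, zero_add] at h4
            exact h4
        · apply le_antisymm
          · rw [Submodule.span_le]
            rintro x ⟨k, rfl⟩
            by_cases hk : k = i0
            · rw [hN', hk, Function.update_self]; exact hvmem
            · rw [hN', Function.update_of_ne hk]; exact hNmem k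
          · rw [← hNspan, Submodule.span_le]
            rintro x ⟨k, rfl⟩
            have hmemN' : ∀ k', k' ≠ i0 →
                N k' ∈ Submodule.span (Polynomial K) (Set.range N') := fun k' hk' =>
              Submodule.subset_span ⟨k', by rw [hN', Function.update_of_ne hk']⟩
            have hvmemN' : v ∈ Submodule.span (Polynomial K) (Set.range N') :=
              Submodule.subset_span ⟨i0, by rw [hN', Function.update_self]⟩
            have hNi0 : N i0 ∈ Submodule.span (Polynomial K) (Set.range N') := by
              have hsplit : v = e i0 • N i0 + ∑ k ∈ Finset.univ.erase i0, e k • N k := by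
                rw [hv, ← Finset.add_sum_erase _ (fun k => e k • N k) (Finset.mem_univ i0)]
              have hrepr : N i0 = Polynomial.C (c i0)⁻¹
                  • (v - ∑ k ∈ Finset.univ.erase i0, e k • N k) := by
                rw [hsplit]
                simp only [add_sub_cancel_right]
                rw [hei0, smul_smul, ← Polynomial.C_mul, inv_mul_cancel₀ hci0,
                  Polynomial.C_1, one_smul]
              rw [hrepr]
              refine Submodule.smul_mem _ _ (Submodule.sub_mem _ hvmemN' ?_)
              exact Submodule.sum_mem _ fun k hk =>
                Submodule.smul_mem _ _ (hmemN' k (Finset.ne_of_mem_erase hk))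
            by_cases hk : k = i0
            · rw [hk]; exact hNi0
            · exact hmemN' k hk
      have hcount := hminimal N' hN'basis (dM - 1)
      have hvN'le : vecDeg (N' i0) ≤ dM - 1 := by
        rw [hN', Function.update_self]; exact hvdeg
      have hdN : vecDeg (N i0) = dM := by
        rw [hdM, hd]; exact (hdeg i0).symm
      have hfilter : Finset.univ.filter (fun i => vecDeg (N' i) ≤ dM - 1)
          = insert i0 (Finset.univ.filter (fun i => vecDeg (N i) ≤ dM - 1)) := by
        ext k
        by_cases hk : k = i0
        · subst hk
          simp [Finset.mem_filter, Finset.mem_insert, hvN'le]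
        · simp only [Finset.mem_filter, Finset.mem_insert, Finset.mem_univ, true_and, hk,
            false_or]
          rw [hN', Function.update_of_ne hk]
      have hi0notin : i0 ∉ Finset.univ.filter (fun i => vecDeg (N i) ≤ dM - 1) := by
        simp only [Finset.mem_filter, Finset.mem_univ, true_and, hdN]
        omega
      rw [hfilter, Finset.card_insert_of_notMem hi0notin] at hcount
      omega
  have hunit : IsUnit L := Matrix.linearIndependent_rows_iff_isUnit.mp hlind
  show (leadingRowMatrix S).rank = Fintype.card (Fin p)
  rw [← hL]
  exact Matrix.rank_of_isUnit L hunit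


/-- There is a constant matrix `Q` such that the McMillan degree of the
top `n × n` submatrix of `Q M` equals that of `Q M` (and of `M`); for such a `Q`, the
last `p` columns of any minimal basis of the left nullspace module of `Q M` form a
row-reduced matrix whose row degrees are the Kronecker indices of `Q M`. -/
theorem exists_conditioning_matrix
    {n p : ℕ} [Infinite K]
    (M : Matrix (Fin n ⊕ Fin p) (Fin n) (Polynomial K))
    (hrank : polyRank M = n) :
    ∃ Q : Matrix (Fin n ⊕ Fin p) (Fin n ⊕ Fin p) K,
      mcMillanDeg ((Q.map Polynomial.C * M).submatrix (Sum.inl : Fin n → Fin n ⊕ Fin p) id) n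
          = mcMillanDeg (Q.map Polynomial.C * M) n ∧
      mcMillanDeg (Q.map Polynomial.C * M) n = mcMillanDeg M n ∧
      ∀ N : Fin p → (Fin n ⊕ Fin p → Polynomial K),
        IsMinimalNullBasis (Q.map Polynomial.C * M) N →
          IsRowReduced (Matrix.of fun i j => N i (Sum.inr j)) ∧
          ∀ i, vecDeg (fun j => N i (Sum.inr j)) = vecDeg (N i) := by
  classical
  obtain ⟨f1, hf1inj, hf1det⟩ := exists_nonsing_rows M hrank
  set Φ : Finset (Fin n → Fin n ⊕ Fin p) := Finset.univ.filter
    (fun f => Function.Injective f ∧ (M.submatrix f id).det ≠ 0) with hΦ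
  have hΦne : Φ.Nonempty := ⟨f1, by simp [hΦ, hf1inj, hf1det]⟩
  obtain ⟨fs, hfsΦ, hfsmax⟩ := Finset.exists_max_image Φ
    (fun f => (M.submatrix f id).det.natDegree) hΦne
  rw [hΦ, Finset.mem_filter] at hfsΦ
  obtain ⟨-, hfsinj, hfsdet⟩ := hfsΦ
  have hmaxf : ∀ f : Fin n → Fin n ⊕ Fin p, Function.Injective f →
      (M.submatrix f id).det.natDegree ≤ (M.submatrix fs id).det.natDegree := by
    intro f hfinj
    by_cases hz : (M.submatrix f id).det = 0
    · simp [hz]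
    · exact hfsmax f (by simp [hΦ, hfinj, hz])
  obtain ⟨σ, hσ⟩ := exists_perm_extend fs hfsinj
  refine ⟨Matrix.of fun a b => if b = σ a then (1:K) else 0, ?_⟩
  have hQA : (Matrix.of fun a b => if b = σ a then (1:K) else 0).map Polynomial.C * M
      = M.submatrix σ id := permMatrix_mul σ M
  rw [hQA]
  set A : Matrix (Fin n ⊕ Fin p) (Fin n) (Polynomial K) := M.submatrix (⇑σ) id with hA
  have hTeq : A.submatrix (Sum.inl : Fin n → Fin n ⊕ Fin p) id = M.submatrix fs id := by
    ext k j; simp [hA, hσ]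
  have hTdet : (A.submatrix Sum.inl id).det ≠ 0 := by rw [hTeq]; exact hfsdet
  have hmaxA : ∀ h : Fin n → Fin n ⊕ Fin p, Function.Injective h →
      ((A.submatrix h id).det).natDegree ≤ ((A.submatrix Sum.inl id).det).natDegree := by
    intro h hinj
    rw [hTeq]
    have h1 : A.submatrix h id = M.submatrix (⇑σ ∘ h) id := by
      ext k j; simp [hA]
    rw [h1]
    exact hmaxf _ (σ.injective.comp hinj)
  have hMM : mcMillanDeg M n = (M.submatrix fs id).det.natDegree :=
    mcMillanDeg_eq_of_max M fs hfsinj hmaxf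
  have hMA : mcMillanDeg A n = mcMillanDeg M n := mcMillanDeg_perm M σ
  refine ⟨?_, hMA, fun N hmin => minimal_basis_conclusion A hTdet hmaxA N hmin⟩
  rw [mcMillanDeg_square, hTeq, ← hMM, hMA]

end PolyNull
end

section
/- Let K be a field and M ∈ K[x]^{m×n} of degree d and rank r, with Kronecker indices δ₁ ≤ … ≤ δ_{m−r}. Then δ₁ + δ₂ + … + δ_{m−r} ≤ r·d. In particular, M admits a basis of its left nullspace module consisting of m−r polynomial vectors whose degree sum is at most r·d. -/
set_option synthInstance.maxHeartbeats 1000000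
set_option maxHeartbeats 1600000

open Polynomial Matrix

namespace PolyNull

variable {K : Type*} [Field K]

/-- counting lemma -/
lemma sum_le_of_card_filter_le {k : ℕ} (a b : Fin k → ℕ)
    (h : ∀ t : ℕ, (Finset.univ.filter fun i => b i ≤ t).card
      ≤ (Finset.univ.filter fun i => a i ≤ t).card) :
    (∑ i, a i) ≤ ∑ i, b i := by
  classical
  set T := Finset.univ.sup b with hT
  have hbT : ∀ i, b i ≤ T := fun i => Finset.le_sup (Finset.mem_univ i)
  have haT : ∀ i, a i ≤ T := by
    by_contra hc
    push_neg at hc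
    obtain ⟨i, hi⟩ := hc
    have h1 : (Finset.univ.filter fun j => b j ≤ T).card = k := by
      rw [Finset.filter_true_of_mem (fun j _ => hbT j), Finset.card_univ, Fintype.card_fin]
    have h2 := h T
    rw [h1] at h2
    have h3 : (Finset.univ.filter fun j => a j ≤ T).card ≤ k := by
      refine le_trans (Finset.card_filter_le _ _) ?_
      rw [Finset.card_univ, Fintype.card_fin]
    have h4 : (Finset.univ.filter fun j => a j ≤ T) = Finset.univ := by
      apply Finset.eq_univ_of_card
      rw [Fintype.card_fin]
      omega
    have := Finset.mem_filter.mp (h4 ▸ Finset.mem_univ i)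
    omega
  have key : ∀ c : Fin k → ℕ, (∀ i, c i ≤ T) →
      (∑ i, c i) = ∑ t ∈ Finset.range T, (Finset.univ.filter fun i => t < c i).card := by
    intro c hc
    have heq : ∀ i : Fin k, c i = ((Finset.range T).filter fun t => t < c i).card := by
      intro i
      have : ((Finset.range T).filter fun t => t < c i) = Finset.range (c i) := by
        ext t
        simp only [Finset.mem_filter, Finset.mem_range]
        exact ⟨fun ht => ht.2, fun ht => ⟨lt_of_lt_of_le ht (hc i), ht⟩⟩
      rw [this, Finset.card_range]
    calc (∑ i, c i) = ∑ i, ∑ t ∈ Finset.range T, if t < c i then 1 else 0 := by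
          refine Finset.sum_congr rfl fun i _ => ?_
          conv_lhs => rw [heq i, Finset.card_filter]
      _ = ∑ t ∈ Finset.range T, ∑ i : Fin k, if t < c i then 1 else 0 := Finset.sum_comm
      _ = ∑ t ∈ Finset.range T, (Finset.univ.filter fun i => t < c i).card := by
          refine Finset.sum_congr rfl fun t _ => ?_
          rw [Finset.card_filter]
  have compl : ∀ (c : Fin k → ℕ) (t : ℕ),
      (Finset.univ.filter fun i => t < c i).card
        = k - (Finset.univ.filter fun i => c i ≤ t).card := by
    intro c t
    have h5 := Finset.card_filter_add_card_filter_not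
      (s := (Finset.univ : Finset (Fin k))) (p := fun i => c i ≤ t)
    simp only [Finset.card_univ, Fintype.card_fin] at h5
    have heq : (Finset.univ.filter fun i : Fin k => ¬ c i ≤ t)
        = Finset.univ.filter fun i => t < c i := by
      apply Finset.filter_congr; intro i _; simp [not_le]
    rw [heq] at h5
    omega
  rw [key a haT, key b hbT]
  apply Finset.sum_le_sum
  intro t _
  rw [compl a t, compl b t]
  have h1 := h t
  have h2 : (Finset.univ.filter fun i => a i ≤ t).card ≤ k := by
    refine le_trans (Finset.card_filter_le _ _) ?_
    rw [Finset.card_univ, Fintype.card_fin]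
  omega

/-- coefficient of a product at the sum of degree bounds -/
lemma coeff_prod_at_sum {ι : Type*} (s : Finset ι) (f : ι → Polynomial K) (d : ι → ℕ)
    (h : ∀ i ∈ s, (f i).natDegree ≤ d i) :
    (∏ i ∈ s, f i).coeff (∑ i ∈ s, d i) = ∏ i ∈ s, (f i).coeff (d i) := by
  classical
  induction s using Finset.induction_on with
  | empty => simp
  | @insert x s' hx ih =>
    rw [Finset.prod_insert hx, Finset.sum_insert hx, Finset.prod_insert hx]
    rw [coeff_mul_add_eq_of_natDegree_le (h x (Finset.mem_insert_self x s'))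
      (le_trans (natDegree_prod_le s' f)
        (Finset.sum_le_sum fun i hi => h i (Finset.mem_insert_of_mem hi)))]
    rw [ih fun i hi => h i (Finset.mem_insert_of_mem hi)]

/-- degree bound on determinants, columnwise -/
lemma natDegree_det_le {ι : Type*} [Fintype ι] [DecidableEq ι]
    (A : Matrix ι ι (Polynomial K)) (c : ι → ℕ) (h : ∀ i j, (A i j).natDegree ≤ c j) :
    A.det.natDegree ≤ ∑ j, c j := by
  rw [Matrix.det_apply]
  refine natDegree_sum_le_of_forall_le _ _ fun σ _ => ?_
  rw [Units.smul_def, zsmul_eq_mul]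
  refine le_trans (natDegree_mul_le) ?_
  rw [natDegree_intCast, zero_add]
  refine le_trans (natDegree_prod_le Finset.univ _) ?_
  exact Finset.sum_le_sum fun j _ => h (σ j) j

/-- coefficient of the determinant at the sum of row degrees -/
lemma coeff_det_at_sum {ι : Type*} [Fintype ι] [DecidableEq ι]
    (A : Matrix ι ι (Polynomial K)) (d : ι → ℕ) (h : ∀ i j, (A i j).natDegree ≤ d i) :
    A.det.coeff (∑ i, d i) = Matrix.det (Matrix.of fun i j => (A i j).coeff (d i)) := by
  rw [Matrix.det_apply, Matrix.det_apply, finset_sum_coeff]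
  refine Finset.sum_congr rfl fun σ _ => ?_
  rw [Units.smul_def, Units.smul_def, coeff_smul]
  congr 1
  have hsum : (∑ i, d i) = ∑ i, d (σ i) := (Equiv.sum_comp σ d).symm
  rw [hsum, coeff_prod_at_sum _ _ _ (fun i _ => h (σ i) i)]
  simp


/-- From a family whose span has finrank `t`, extract a spanning subfamily of size `t`. -/
lemma exists_span_subfamily {F V ι : Type*} [Field F] [AddCommGroup V] [Module F V]
    [FiniteDimensional F V] (f : ι → V) {t : ℕ}
    (ht : Module.finrank F (Submodule.span F (Set.range f)) = t) :
    ∃ g : Fin t → ι, Submodule.span F (Set.range (f ∘ g)) = Submodule.span F (Set.range f) := by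
  classical
  obtain ⟨s, hsub, hspan, hind⟩ := exists_linearIndependent F (Set.range f)
  have hfin : s.Finite := hind.setFinite
  letI : Fintype s := hfin.fintype
  have hcard : s.toFinset.card = t := by
    rw [← finrank_span_set_eq_card hind, hspan, ht]
  have hcard' : Fintype.card s = t := by rwa [Set.toFinset_card] at hcard
  let e : Fin t ≃ s := (Fintype.equivFinOfCardEq hcard').symm
  have hse : ∀ i : Fin t, ((e i : V) ∈ Set.range f) := fun i => hsub (e i).2
  choose g hg using hse
  refine ⟨g, ?_⟩
  have hrange : Set.range (f ∘ g) = s := by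
    ext y
    constructor
    · rintro ⟨i, rfl⟩
      simp only [Function.comp_apply, hg i]
      exact (e i).2
    · intro hy
      exact ⟨e.symm ⟨y, hy⟩, by simp [Function.comp_apply, hg, e]⟩
  rw [hrange, hspan]

/-- Clearing denominators for a finite family of rational functions. -/
lemma exists_poly_multiple {ι : Type*} [Fintype ι] (c : ι → RatFunc K) :
    ∃ q : Polynomial K, q ≠ 0 ∧ ∃ p : ι → Polynomial K,
      ∀ i, algebraMap (Polynomial K) (RatFunc K) (p i)
        = algebraMap (Polynomial K) (RatFunc K) q * c i := by
  obtain ⟨b, hb⟩ := IsLocalization.exist_integer_multiples_of_finite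
    (nonZeroDivisors (Polynomial K)) c
  choose p hp using hb
  refine ⟨(b : Polynomial K), nonZeroDivisors.coe_ne_zero b, p, fun i => ?_⟩
  rw [hp i, Algebra.smul_def]

lemma ratMat_vecMul {m n : Type*} [Fintype m] (M : Matrix m n (Polynomial K))
    (v : m → Polynomial K) (j : n) :
    ((fun l => algebraMap (Polynomial K) (RatFunc K) (v l)) ᵥ* (ratMat M)) j
      = algebraMap (Polynomial K) (RatFunc K) ((v ᵥ* M) j) := by
  simp [Matrix.vecMul, dotProduct, ratMat, map_sum]

lemma algebraMap_ratFunc_injective :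
    Function.Injective (algebraMap (Polynomial K) (RatFunc K)) :=
  IsFractionRing.injective (Polynomial K) (RatFunc K)



/-- A polynomial vector mapped into `K(x)^m`. -/
noncomputable def ratVec {m : Type*} (v : m → Polynomial K) : m → RatFunc K :=
  fun l => algebraMap (Polynomial K) (RatFunc K) (v l)

lemma ratVec_mem_ker {m n : ℕ} (M : Matrix (Fin m) (Fin n) (Polynomial K))
    {v : Fin m → Polynomial K} (hv : v ∈ leftNullMod M) :
    ratVec v ∈ LinearMap.ker (ratMat M).vecMulLinear := by
  rw [LinearMap.mem_ker]
  funext j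
  rw [Matrix.vecMulLinear_apply]
  show (ratVec v ᵥ* ratMat M) j = 0
  have := ratMat_vecMul M v j
  rw [show (ratVec v) = (fun l => algebraMap (Polynomial K) (RatFunc K) (v l)) from rfl, this]
  rw [leftNullMod, LinearMap.mem_ker] at hv
  have hvj : (v ᵥ* M) j = 0 := by
    rw [← Matrix.vecMulLinear_apply, hv]; rfl
  rw [hvj, map_zero]

/-- The core lemma: if the leading row coefficient matrix has an invertible square
submatrix on columns `emb`, then a nonzero `K[x]`-combination of the rows cannot
vanish identically on the columns `emb`. -/
lemma star_poly {m k : ℕ} (B : Fin k → (Fin m → Polynomial K)) (emb : Fin k → Fin m)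
    (hdet : ((leadingRowMatrix (Matrix.of B)).submatrix id emb).det ≠ 0)
    (p : Fin k → Polynomial K)
    (h0 : ∀ j : Fin k, (∑ i, p i • B i) (emb j) = 0) :
    ∀ i, p i = 0 := by
  classical
  by_contra hc
  push_neg at hc
  obtain ⟨i₁, hi₁⟩ := hc
  set δ : Fin k → ℕ := fun i => vecDeg (B i) with hδ
  set L : Matrix (Fin k) (Fin m) K := leadingRowMatrix (Matrix.of B) with hL
  set S : Finset (Fin k) := Finset.univ.filter (fun i => p i ≠ 0) with hS
  have hSne : S.Nonempty := ⟨i₁, by simp [hS, hi₁]⟩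
  set t : ℕ := S.sup (fun i => (p i).natDegree + δ i) with ht
  obtain ⟨i₀, hi₀S, hi₀⟩ := Finset.exists_mem_eq_sup S hSne (fun i => (p i).natDegree + δ i)
  have hpi₀ : p i₀ ≠ 0 := (Finset.mem_filter.mp hi₀S).2
  set c : Fin k → K := fun i => (p i).coeff (t - δ i) with hc'
  have hle : ∀ i, p i ≠ 0 → (p i).natDegree + δ i ≤ t := by
    intro i hi
    have hiS : i ∈ S := by simp [hS, hi]
    exact Finset.le_sup (f := fun i => (p i).natDegree + δ i) hiS
  have hBdeg : ∀ i l, (B i l).natDegree ≤ δ i := by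
    intro i l
    simp only [hδ, vecDeg]
    exact Finset.le_sup (f := fun l => (B i l).natDegree) (Finset.mem_univ l)
  have hLdef : ∀ i l, L i l = (B i l).coeff (δ i) := fun i l => rfl
  have claimA : ∀ l : Fin m, ((∑ i, p i • B i) l).coeff t = ∑ i, c i * L i l := by
    intro l
    have : (∑ i, p i • B i) l = ∑ i, p i * B i l := by
      rw [Finset.sum_apply]
      exact Finset.sum_congr rfl fun i _ => rfl
    rw [this, finset_sum_coeff]
    refine Finset.sum_congr rfl fun i _ => ?_
    by_cases hpi : p i = 0
    · simp [hpi, hc']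
    · have h1 : (p i).natDegree + δ i ≤ t := hle i hpi
      have h2 : δ i ≤ t := le_trans (Nat.le_add_left _ _) h1
      have h3 : t = (t - δ i) + δ i := by omega
      rw [h3, coeff_mul_add_eq_of_natDegree_le (by omega) (hBdeg i l)]
      rfl
  have hcne : c ≠ 0 := by
    intro hzero
    have : c i₀ = 0 := congrFun hzero i₀
    rw [hc'] at this
    simp only at this
    have htd : t - δ i₀ = (p i₀).natDegree := by omega
    rw [htd] at this
    exact hpi₀ (leadingCoeff_eq_zero.mp this)
  have hvm : c ᵥ* (L.submatrix id emb) = 0 := by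
    funext j
    have := claimA (emb j)
    rw [h0 j, coeff_zero] at this
    show (c ᵥ* L.submatrix id emb) j = 0
    rw [Matrix.vecMul, dotProduct]
    simp only [Matrix.submatrix_apply, id_eq]
    exact this.symm
  exact hdet (Matrix.exists_vecMul_eq_zero_iff.mp ⟨c, hcne, hvm⟩)


lemma ratVec_linearIndependent {m k : ℕ} {B : Fin k → (Fin m → Polynomial K)}
    (hind : LinearIndependent (Polynomial K) B) :
    LinearIndependent (RatFunc K) (fun i => ratVec (B i)) := by
  rw [Fintype.linearIndependent_iff]
  intro c hc
  obtain ⟨q, hq, p, hp⟩ := exists_poly_multiple c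
  have hpz : ∀ i, p i = 0 := by
    have hz : ∀ l : Fin m, (∑ i, p i * B i l) = 0 := by
      intro l
      apply algebraMap_ratFunc_injective
      rw [map_sum, map_zero]
      have key : ∀ i, algebraMap (Polynomial K) (RatFunc K) (p i * B i l)
          = algebraMap (Polynomial K) (RatFunc K) q * (c i * ratVec (B i) l) := by
        intro i
        rw [_root_.map_mul, hp i, ratVec]
        ring
      rw [Finset.sum_congr rfl fun i _ => key i, ← Finset.mul_sum]
      have hcl : (∑ i, c i * ratVec (B i) l) = 0 := by
        have := congrFun hc l
        simp only [Finset.sum_apply, Pi.smul_apply, smul_eq_mul, Pi.zero_apply] at this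
        exact this
      rw [hcl, mul_zero]
    have := Fintype.linearIndependent_iff.mp hind p ?_
    · exact this
    · funext l
      have := hz l
      rw [Finset.sum_apply]
      simpa using this
  intro i
  have h1 : algebraMap (Polynomial K) (RatFunc K) q * c i = 0 := by
    rw [← hp i, hpz i, map_zero]
  have h2 : algebraMap (Polynomial K) (RatFunc K) q ≠ 0 := by
    simpa using fun h => hq (algebraMap_ratFunc_injective (by simpa using h))
  exact (mul_eq_zero.mp h1).resolve_left h2

lemma finrank_ker_vecMulLinear {m n r : ℕ} (M : Matrix (Fin m) (Fin n) (Polynomial K))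
    (hrank : polyRank M = r) :
    Module.finrank (RatFunc K) (LinearMap.ker (ratMat M).vecMulLinear) = m - r := by
  have heq : (ratMat M).vecMulLinear = ((ratMat M)ᵀ).mulVecLin := by
    apply LinearMap.ext
    intro v
    rw [Matrix.vecMulLinear_apply, Matrix.mulVecLin_apply, Matrix.mulVec_transpose]
  have hrange : Module.finrank (RatFunc K)
      (LinearMap.range (ratMat M).vecMulLinear) = r := by
    rw [heq]
    have : ((ratMat M)ᵀ).rank = r := by rw [Matrix.rank_transpose]; exact hrank
    exact this
  have hrn := LinearMap.finrank_range_add_finrank_ker (ratMat M).vecMulLinear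
  have hdim : Module.finrank (RatFunc K) (Fin m → RatFunc K) = m := by
    simp [Module.finrank_pi]
  rw [hdim, hrange] at hrn
  omega

lemma span_ratVec_eq_ker {m n k r : ℕ} (M : Matrix (Fin m) (Fin n) (Polynomial K))
    (hrank : polyRank M = r) (hk : k = m - r) {B : Fin k → (Fin m → Polynomial K)}
    (hind : LinearIndependent (Polynomial K) B)
    (hspan : Submodule.span (Polynomial K) (Set.range B) = leftNullMod M) :
    Submodule.span (RatFunc K) (Set.range fun i => ratVec (B i))
      = LinearMap.ker (ratMat M).vecMulLinear := by
  have hmem : ∀ i, ratVec (B i) ∈ LinearMap.ker (ratMat M).vecMulLinear := by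
    intro i
    apply ratVec_mem_ker
    rw [← hspan]
    exact Submodule.subset_span ⟨i, rfl⟩
  have hle : Submodule.span (RatFunc K) (Set.range fun i => ratVec (B i))
      ≤ LinearMap.ker (ratMat M).vecMulLinear := by
    rw [Submodule.span_le]
    rintro x ⟨i, rfl⟩
    exact hmem i
  have hind' := ratVec_linearIndependent (K := K) hind
  have h1 : Module.finrank (RatFunc K)
      (Submodule.span (RatFunc K) (Set.range fun i => ratVec (B i))) = k := by
    rw [finrank_span_eq_card hind', Fintype.card_fin]
  apply Submodule.eq_of_le_of_finrank_le hle
  rw [h1, finrank_ker_vecMulLinear M hrank, hk]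

lemma star_rat {m n k r : ℕ} (M : Matrix (Fin m) (Fin n) (Polynomial K))
    (hrank : polyRank M = r) (hk : k = m - r) {B : Fin k → (Fin m → Polynomial K)}
    (hind : LinearIndependent (Polynomial K) B)
    (hspan : Submodule.span (Polynomial K) (Set.range B) = leftNullMod M)
    (emb : Fin k → Fin m)
    (hdet : ((leadingRowMatrix (Matrix.of B)).submatrix id emb).det ≠ 0)
    (u : Fin m → RatFunc K) (hu : u ∈ LinearMap.ker (ratMat M).vecMulLinear)
    (h0 : ∀ j : Fin k, u (emb j) = 0) : u = 0 := by
  rw [← span_ratVec_eq_ker M hrank hk hind hspan] at hu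
  obtain ⟨c, hc⟩ := (Submodule.mem_span_range_iff_exists_fun (RatFunc K)).mp hu
  obtain ⟨q, hq, p, hp⟩ := exists_poly_multiple c
  have hqa : algebraMap (Polynomial K) (RatFunc K) q ≠ 0 := by
    simpa using fun h => hq (algebraMap_ratFunc_injective (by simpa using h))
  have hw : ∀ j : Fin k, (∑ i, p i • B i) (emb j) = 0 := by
    intro j
    apply algebraMap_ratFunc_injective
    rw [map_zero, Finset.sum_apply]
    have : ∀ i : Fin k, (p i • B i) (emb j) = p i * B i (emb j) := fun i => rfl
    rw [Finset.sum_congr rfl fun i _ => this i, map_sum]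
    have key : ∀ i, algebraMap (Polynomial K) (RatFunc K) (p i * B i (emb j))
        = algebraMap (Polynomial K) (RatFunc K) q * (c i * ratVec (B i) (emb j)) := by
      intro i
      rw [_root_.map_mul, hp i, ratVec]
      ring
    rw [Finset.sum_congr rfl fun i _ => key i, ← Finset.mul_sum]
    have hcl : (∑ i, c i * ratVec (B i) (emb j)) = 0 := by
      have := congrFun hc (emb j)
      simp only [Finset.sum_apply, Pi.smul_apply, smul_eq_mul] at this
      rw [this, h0 j]
    rw [hcl, mul_zero]
  have hpz := star_poly B emb hdet p hw
  have hcz : ∀ i, c i = 0 := by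
    intro i
    have h1 : algebraMap (Polynomial K) (RatFunc K) q * c i = 0 := by
      rw [← hp i, hpz i, map_zero]
    exact (mul_eq_zero.mp h1).resolve_left hqa
  rw [← hc]
  refine Finset.sum_eq_zero fun i _ => ?_
  rw [hcz i, zero_smul]


/-- Replacing one basis row by a combination with unit coefficient on that row
yields another basis. -/
lemma isNullBasis_update {m n k : ℕ} (M : Matrix (Fin m) (Fin n) (Polynomial K))
    {B : Fin k → (Fin m → Polynomial K)} (hB : IsNullBasis M B)
    (i₀ : Fin k) (q : Fin k → Polynomial K) (hq : IsUnit (q i₀)) :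
    IsNullBasis M (Function.update B i₀ (∑ i, q i • B i)) := by
  classical
  obtain ⟨hind, hspan⟩ := hB
  set w : Fin m → Polynomial K := ∑ i, q i • B i with hw
  set B' := Function.update B i₀ w with hB'
  have hBnull : ∀ i, B i ∈ leftNullMod M := by
    intro i
    rw [← hspan]
    exact Submodule.subset_span ⟨i, rfl⟩
  have hwnull : w ∈ leftNullMod M :=
    Submodule.sum_mem _ fun i _ => Submodule.smul_mem _ _ (hBnull i)
  have hwmem : w ∈ Submodule.span (Polynomial K) (Set.range B') :=
    Submodule.subset_span ⟨i₀, by simp [hB', Function.update_self]⟩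
  have hBmem : ∀ i, i ≠ i₀ → B i ∈ Submodule.span (Polynomial K) (Set.range B') := by
    intro i hi
    exact Submodule.subset_span ⟨i, by simp [hB', Function.update_of_ne hi]⟩
  have hsum : q i₀ • B i₀ + ∑ i ∈ Finset.univ.erase i₀, q i • B i = w := by
    rw [hw]; exact Finset.add_sum_erase _ (fun i => q i • B i) (Finset.mem_univ i₀)
  have hBi₀ : B i₀ = (↑hq.unit⁻¹ : Polynomial K) •
      (w - ∑ i ∈ Finset.univ.erase i₀, q i • B i) := by
    have h1 : w - ∑ i ∈ Finset.univ.erase i₀, q i • B i = q i₀ • B i₀ := by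
      rw [← hsum]; abel
    rw [h1, smul_smul]
    have h2 : (↑hq.unit⁻¹ : Polynomial K) * q i₀ = 1 := hq.val_inv_mul
    rw [h2, one_smul]
  constructor
  · rw [Fintype.linearIndependent_iff]
    intro a ha
    set b : Fin k → Polynomial K :=
      fun i => if i = i₀ then a i₀ * q i₀ else a i + a i₀ * q i with hb
    have hab : ∑ i, b i • B i = 0 := by
      rw [← ha]
      rw [← Finset.add_sum_erase _ (fun i => b i • B i) (Finset.mem_univ i₀),
          ← Finset.add_sum_erase _ (fun i => a i • B' i) (Finset.mem_univ i₀)]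
      have e1 : B' i₀ = w := by simp [hB', Function.update_self]
      have e2 : ∀ i ∈ Finset.univ.erase i₀, a i • B' i = a i • B i := by
        intro i hi
        rw [hB', Function.update_of_ne (Finset.ne_of_mem_erase hi)]
      rw [e1, Finset.sum_congr rfl e2]
      have e3 : a i₀ • w = (a i₀ * q i₀) • B i₀
          + ∑ i ∈ Finset.univ.erase i₀, (a i₀ * q i) • B i := by
        rw [hw, Finset.smul_sum,
            ← Finset.add_sum_erase _ (fun i => a i₀ • (q i • B i)) (Finset.mem_univ i₀)]
        simp [smul_smul]
      rw [e3]
      have e4 : ∀ i ∈ Finset.univ.erase i₀, b i • B i = a i • B i + (a i₀ * q i) • B i := by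
        intro i hi
        rw [hb]
        simp only [Finset.ne_of_mem_erase hi, if_false]
        rw [add_smul]
      rw [Finset.sum_congr rfl e4, Finset.sum_add_distrib]
      have e5 : b i₀ • B i₀ = (a i₀ * q i₀) • B i₀ := by simp [hb]
      rw [e5]
      abel
    have hbz := Fintype.linearIndependent_iff.mp hind b hab
    have ha₀ : a i₀ = 0 := by
      have := hbz i₀
      rw [hb] at this
      simp only [if_pos rfl] at this
      rcases mul_eq_zero.mp this with h | h
      · exact h
      · exact absurd h hq.ne_zero
    intro i
    by_cases hi : i = i₀
    · rw [hi]; exact ha₀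
    · have := hbz i
      rw [hb] at this
      simp only [hi, if_false, ha₀, zero_mul, add_zero] at this
      exact this
  · apply le_antisymm
    · rw [Submodule.span_le]
      rintro x ⟨i, rfl⟩
      by_cases hi : i = i₀
      · rw [hi]
        simpa [hB', Function.update_self] using hwnull
      · rw [hB', Function.update_of_ne hi]
        exact hBnull i
    · rw [← hspan, Submodule.span_le]
      rintro x ⟨i, rfl⟩
      by_cases hi : i = i₀
      · rw [hi, hBi₀]
        refine Submodule.smul_mem _ _ (Submodule.sub_mem _ hwmem ?_)
        exact Submodule.sum_mem _ fun i hi =>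
          Submodule.smul_mem _ _ (hBmem i (Finset.ne_of_mem_erase hi))
      · exact hBmem i hi


/-- There is a basis of minimal degree sum, and it is row reduced. -/
lemma exists_good_basis {m n k : ℕ} (M : Matrix (Fin m) (Fin n) (Polynomial K))
    (hex : ∃ B : Fin k → (Fin m → Polynomial K), IsNullBasis M B) :
    ∃ B : Fin k → (Fin m → Polynomial K), IsNullBasis M B ∧
      LinearIndependent K (fun i => leadingRowMatrix (Matrix.of B) i) ∧
      ∀ B' : Fin k → (Fin m → Polynomial K), IsNullBasis M B' →
        (∑ i, vecDeg (B i)) ≤ ∑ i, vecDeg (B' i) := by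
  classical
  set P : ℕ → Prop := fun s => ∃ B : Fin k → (Fin m → Polynomial K),
    IsNullBasis M B ∧ (∑ i, vecDeg (B i)) = s with hP
  have hPex : ∃ s, P s := by
    obtain ⟨B, hB⟩ := hex
    exact ⟨∑ i, vecDeg (B i), B, hB, rfl⟩
  obtain ⟨B, hB, hBsum⟩ := Nat.find_spec hPex
  have hmin : ∀ B' : Fin k → (Fin m → Polynomial K), IsNullBasis M B' →
      (∑ i, vecDeg (B i)) ≤ ∑ i, vecDeg (B' i) := by
    intro B' hB'
    rw [hBsum]
    exact Nat.find_le ⟨B', hB', rfl⟩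
  refine ⟨B, hB, ?_, hmin⟩
  by_contra hdep
  obtain ⟨g, hg0, i₁, hi₁⟩ := Fintype.not_linearIndependent_iff.mp hdep
  set L : Matrix (Fin k) (Fin m) K := leadingRowMatrix (Matrix.of B) with hL
  set δ : Fin k → ℕ := fun i => vecDeg (B i) with hδ
  set S : Finset (Fin k) := Finset.univ.filter (fun i => g i ≠ 0) with hS
  have hSne : S.Nonempty := ⟨i₁, by simp [hS, hi₁]⟩
  obtain ⟨i₀, hi₀S, hi₀⟩ := Finset.exists_mem_eq_sup S hSne δ
  have hgi₀ : g i₀ ≠ 0 := (Finset.mem_filter.mp hi₀S).2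
  have hδle : ∀ i, g i ≠ 0 → δ i ≤ δ i₀ := by
    intro i hi
    rw [← hi₀]
    exact Finset.le_sup (by simp [hS, hi])
  set q : Fin k → Polynomial K := fun i => C (g i) * X ^ (δ i₀ - δ i) with hq
  have hqu : IsUnit (q i₀) := by
    rw [hq]
    simp only [Nat.sub_self, pow_zero, mul_one]
    exact isUnit_C.mpr (Ne.isUnit hgi₀)
  set w : Fin m → Polynomial K := ∑ i, q i • B i with hw
  have hBdeg : ∀ i l, (B i l).natDegree ≤ δ i := by
    intro i l
    simp only [hδ, vecDeg]
    exact Finset.le_sup (f := fun l => (B i l).natDegree) (Finset.mem_univ l)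
  have hwdeg : ∀ l, (w l).natDegree ≤ δ i₀ := by
    intro l
    rw [hw, Finset.sum_apply]
    refine natDegree_sum_le_of_forall_le _ _ fun i _ => ?_
    show ((q i • B i) l).natDegree ≤ δ i₀
    have : (q i • B i) l = q i * B i l := rfl
    rw [this]
    by_cases hgi : g i = 0
    · simp [hq, hgi]
    · refine le_trans natDegree_mul_le ?_
      have h1 : (q i).natDegree ≤ δ i₀ - δ i := by
        rw [hq]
        refine le_trans natDegree_mul_le ?_
        simp [natDegree_C, natDegree_X_pow]
      have := hδle i hgi
      have := hBdeg i l
      omega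
  have hwcoeff : ∀ l, (w l).coeff (δ i₀) = 0 := by
    intro l
    rw [hw, Finset.sum_apply, finset_sum_coeff]
    have key : ∀ i, ((q i • B i) l).coeff (δ i₀) = g i * L i l := by
      intro i
      by_cases hgi : g i = 0
      · have : (q i • B i) l = q i * B i l := rfl
        simp [this, hq, hgi]
      · have h1 : (q i • B i) l = C (g i) * (X ^ (δ i₀ - δ i) * B i l) := by
          show q i * B i l = _
          rw [hq, mul_assoc]
        have h2 : δ i + (δ i₀ - δ i) = δ i₀ := by
          have := hδle i hgi; omega
        have h3 := coeff_X_pow_mul (B i l) (δ i₀ - δ i) (δ i)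
        rw [h2] at h3
        rw [h1, coeff_C_mul, h3]
        rfl
    rw [Finset.sum_congr rfl fun i _ => key i]
    have := congrFun hg0 l
    simp only [Finset.sum_apply, Pi.smul_apply, smul_eq_mul, Pi.zero_apply] at this
    exact this
  by_cases hδ₀ : δ i₀ = 0
  · -- w = 0, contradicting linear independence of B
    have hw0 : w = 0 := by
      funext l
      have h1 := hwdeg l
      rw [hδ₀] at h1
      have h2 := hwcoeff l
      rw [hδ₀] at h2
      have := Polynomial.eq_C_of_natDegree_le_zero h1
      rw [this, h2, map_zero]
      rfl
    have := Fintype.linearIndependent_iff.mp hB.1 q (by rw [← hw]; exact hw0) i₀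
    exact hqu.ne_zero this
  · -- degree strictly drops, contradicting minimality
    have hwlt : vecDeg w < δ i₀ := by
      have : ∀ l, (w l).natDegree ≤ δ i₀ - 1 := by
        intro l
        by_cases hwl : w l = 0
        · rw [hwl, natDegree_zero]; omega
        · have h1 := hwdeg l
          have h2 : (w l).natDegree ≠ δ i₀ := by
            intro he
            have := hwcoeff l
            rw [← he] at this
            exact hwl (leadingCoeff_eq_zero.mp this)
          omega
      have : vecDeg w ≤ δ i₀ - 1 := Finset.sup_le fun l _ => this l
      omega
    set B' := Function.update B i₀ w with hB'
    have hB'basis : IsNullBasis M B' := isNullBasis_update M hB i₀ q hqu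
    have hlt : (∑ i, vecDeg (B' i)) < Finset.univ.sum δ := by
      apply Finset.sum_lt_sum
      · intro i _
        by_cases hi : i = i₀
        · rw [hi, hB', Function.update_self]
          exact le_of_lt hwlt
        · rw [hB', Function.update_of_ne hi]
      · exact ⟨i₀, Finset.mem_univ i₀, by
          rw [hB', Function.update_self]; exact hwlt⟩
    exact absurd (hmin B' hB'basis) (not_le.mpr hlt)


/-- From linearly independent rows over a field, select columns giving a nonzero minor. -/
lemma exists_emb_det_ne_zero {k m : ℕ} (L : Matrix (Fin k) (Fin m) K)
    (hrows : LinearIndependent K (fun i => L i)) :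
    ∃ emb : Fin k → Fin m, (L.submatrix id emb).det ≠ 0 := by
  classical
  have hrk : L.rank = k := by
    rw [hrows.rank_matrix, Fintype.card_fin]
  have hspan : Module.finrank K (Submodule.span K (Set.range Lᵀ)) = k := by
    exact (Matrix.rank_eq_finrank_span_cols L).symm.trans hrk
  obtain ⟨emb, hemb⟩ := exists_span_subfamily (f := Lᵀ) hspan
  refine ⟨emb, ?_⟩
  have htop : Submodule.span K (Set.range (Lᵀ ∘ emb)) = ⊤ := by
    rw [hemb]
    apply Submodule.eq_top_of_finrank_eq
    rw [hspan]
    simp [Module.finrank_pi]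
  have hcard : Fintype.card (Fin k) = Module.finrank K (Fin k → K) := by
    simp [Module.finrank_pi]
  have hindep : LinearIndependent K (Lᵀ ∘ emb) :=
    linearIndependent_of_top_le_span_of_card_eq_finrank (le_of_eq htop.symm) hcard
  intro hdet
  obtain ⟨v, hv, hmv⟩ := (Matrix.exists_mulVec_eq_zero_iff).mpr hdet
  have : ∀ j, v j = 0 := by
    apply Fintype.linearIndependent_iff.mp hindep
    funext i
    have := congrFun hmv i
    rw [Matrix.mulVec, dotProduct] at this
    simp only [Finset.sum_apply, Pi.smul_apply, smul_eq_mul, Function.comp_apply,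
      Matrix.transpose_apply, Pi.zero_apply]
    exact (Finset.sum_congr rfl fun j _ => mul_comm _ _).trans this
  exact hv (funext this)

/-- Select `r` columns of `ratMat M` spanning the column space. -/
lemma exists_col_span {m n r : ℕ} (M : Matrix (Fin m) (Fin n) (Polynomial K))
    (hrank : polyRank M = r) :
    ∃ g : Fin r → Fin n, ∀ j : Fin n,
      (fun i => ratMat M i j) ∈ Submodule.span (RatFunc K)
        (Set.range fun s => fun i => ratMat M i (g s)) := by
  classical
  have hspan : Module.finrank (RatFunc K)
      (Submodule.span (RatFunc K) (Set.range (ratMat M)ᵀ)) = r := by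
    exact (Matrix.rank_eq_finrank_span_cols _).symm.trans hrank
  obtain ⟨g, hg⟩ := exists_span_subfamily (f := (ratMat M)ᵀ) hspan
  refine ⟨g, fun j => ?_⟩
  have h1 : (fun i => ratMat M i j) = (ratMat M)ᵀ j := rfl
  have h2 : (fun s => fun i => ratMat M i (g s)) = ((ratMat M)ᵀ ∘ g) := rfl
  rw [h1, h2, hg]
  exact Submodule.subset_span ⟨j, rfl⟩


/-- Complete a basis of the left nullspace to a basis of the full module `K[x]^m`. -/
lemma exists_completion {m n k : ℕ} (M : Matrix (Fin m) (Fin n) (Polynomial K))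
    {B : Fin k → (Fin m → Polynomial K)} (hB : IsNullBasis M B) :
    ∃ (r' : ℕ) (w : Fin r' → (Fin m → Polynomial K)),
      k + r' = m ∧ LinearIndependent (Polynomial K) (Sum.elim B w) ∧
      ⊤ ≤ Submodule.span (Polynomial K) (Set.range (Sum.elim B w)) := by
  classical
  set φ := M.vecMulLinear with hφ
  set R := LinearMap.range φ with hR
  obtain ⟨r', bR⟩ := Submodule.basisOfPid (Pi.basisFun (Polynomial K) (Fin n)) R
  haveI : Module.Projective (Polynomial K) R := Module.Projective.of_basis bR
  obtain ⟨s, hs⟩ := Module.projective_lifting_property φ.rangeRestrict LinearMap.id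
    φ.surjective_rangeRestrict
  have hsid : ∀ x : R, φ.rangeRestrict (s x) = x := by
    intro x
    have := congrFun (congrArg (fun f => f.toFun) hs) x
    exact this
  have hkerπ : LinearMap.ker φ.rangeRestrict = leftNullMod M := by
    rw [LinearMap.ker_rangeRestrict]
    rfl
  have hBker : ∀ i, B i ∈ LinearMap.ker φ.rangeRestrict := by
    intro i
    rw [hkerπ, ← hB.2]
    exact Submodule.subset_span ⟨i, rfl⟩
  set w : Fin r' → (Fin m → Polynomial K) := fun j => s (bR j) with hwdef
  have hind : LinearIndependent (Polynomial K) (Sum.elim B w) := by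
    rw [Fintype.linearIndependent_iff]
    intro a ha
    rw [Fintype.sum_sum_type] at ha
    have hπ : (∑ j, a (Sum.inr j) • bR j) = 0 := by
      have := congrArg φ.rangeRestrict ha
      rw [map_add, map_sum, map_sum, map_zero] at this
      have h1 : ∀ i, φ.rangeRestrict (a (Sum.inl i) • Sum.elim B w (Sum.inl i)) = 0 := by
        intro i
        rw [_root_.map_smul]
        have : φ.rangeRestrict (B i) = 0 := (LinearMap.mem_ker).mp (hBker i)
        simp [this]
      rw [Finset.sum_congr rfl fun i _ => h1 i, Finset.sum_const_zero, zero_add] at this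
      have h2 : ∀ j, φ.rangeRestrict (a (Sum.inr j) • Sum.elim B w (Sum.inr j))
          = a (Sum.inr j) • bR j := by
        intro j
        rw [_root_.map_smul]
        congr 1
        exact hsid (bR j)
      rw [Finset.sum_congr rfl fun j _ => h2 j] at this
      exact this
    have hz2 : ∀ j, a (Sum.inr j) = 0 :=
      Fintype.linearIndependent_iff.mp bR.linearIndependent _ hπ
    have hz1 : ∀ i, a (Sum.inl i) = 0 := by
      apply Fintype.linearIndependent_iff.mp hB.1
      have : (∑ j, a (Sum.inr j) • Sum.elim B w (Sum.inr j)) = 0 := by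
        refine Finset.sum_eq_zero fun j _ => ?_
        rw [hz2 j, zero_smul]
      rw [this, add_zero] at ha
      exact ha
    intro st
    cases st with
    | inl i => exact hz1 i
    | inr j => exact hz2 j
  have hspan : ⊤ ≤ Submodule.span (Polynomial K) (Set.range (Sum.elim B w)) := by
    intro x _
    have hdecomp : x = (x - s (φ.rangeRestrict x)) + s (φ.rangeRestrict x) := by abel
    have hker : x - s (φ.rangeRestrict x) ∈ LinearMap.ker φ.rangeRestrict := by
      rw [LinearMap.mem_ker, map_sub, hsid, sub_self]
    have hmem1 : x - s (φ.rangeRestrict x)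
        ∈ Submodule.span (Polynomial K) (Set.range (Sum.elim B w)) := by
      rw [hkerπ, ← hB.2] at hker
      refine Submodule.span_le.mpr ?_ hker
      rintro y ⟨i, rfl⟩
      exact Submodule.subset_span ⟨Sum.inl i, rfl⟩
    have hmem2 : s (φ.rangeRestrict x)
        ∈ Submodule.span (Polynomial K) (Set.range (Sum.elim B w)) := by
      have h3 := congrArg s (bR.sum_repr (φ.rangeRestrict x))
      rw [map_sum] at h3
      simp only [_root_.map_smul] at h3
      rw [← h3]
      exact Submodule.sum_mem _ fun j _ => Submodule.smul_mem _ _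
        (Submodule.subset_span ⟨Sum.inr j, rfl⟩)
    rw [hdecomp]
    exact Submodule.add_mem _ hmem1 hmem2
  have hcount : k + r' = m := by
    let bas : Module.Basis (Fin k ⊕ Fin r') (Polynomial K) (Fin m → Polynomial K) :=
      Module.Basis.mk hind hspan
    have h1 := Module.finrank_eq_card_basis bas
    have h2 := Module.finrank_eq_card_basis (Pi.basisFun (Polynomial K) (Fin m))
    rw [h1] at h2
    simp only [Fintype.card_sum, Fintype.card_fin] at h2
    omega
  exact ⟨r', w, hcount, hind, hspan⟩


/-- The main degree bound: a row-reduced nullspace basis has degree sum at most `r·d`. -/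
lemma sum_vecDeg_le_of_rowReduced {m n k r : ℕ} (M : Matrix (Fin m) (Fin n) (Polynomial K))
    (hrank : polyRank M = r) (hk : k = m - r)
    {B : Fin k → (Fin m → Polynomial K)} (hB : IsNullBasis M B)
    (hrowred : LinearIndependent K (fun i => leadingRowMatrix (Matrix.of B) i)) :
    (∑ i, vecDeg (B i)) ≤ r * matDeg M := by
  classical
  obtain ⟨emb, hdet⟩ := exists_emb_det_ne_zero (leadingRowMatrix (Matrix.of B)) hrowred
  obtain ⟨r', w, hcount, hind, hspan⟩ := exists_completion M hB
  have hrm : r ≤ m := by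
    have h1 : (ratMat M).rank ≤ Fintype.card (Fin m) := Matrix.rank_le_card_height _
    rw [Fintype.card_fin] at h1
    rw [← hrank]
    exact h1
  have hr' : r' = r := by omega
  subst hr'
  obtain ⟨g, hg⟩ := exists_col_span M hrank
  set d := matDeg M with hd
  set δ : Fin k → ℕ := fun i => vecDeg (B i) with hδ
  set v : Fin k ⊕ Fin r' → (Fin m → Polynomial K) := Sum.elim B w with hv
  set e : Fin k ⊕ Fin r' ≃ Fin m := finSumFinEquiv.trans (finCongr hcount) with he
  set V : Matrix (Fin k ⊕ Fin r') (Fin m) (Polynomial K) := Matrix.of fun st l => v st l with hV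
  set U : Matrix (Fin m) (Fin k ⊕ Fin r') (Polynomial K) :=
    Matrix.of fun l st => Sum.elim (fun j : Fin k => if l = emb j then (1 : Polynomial K) else 0)
      (fun t : Fin r' => M l (g t)) st with hU
  set V' : Matrix (Fin k ⊕ Fin r') (Fin k ⊕ Fin r') (Polynomial K) :=
    V.submatrix id e with hV'
  set U' : Matrix (Fin k ⊕ Fin r') (Fin k ⊕ Fin r') (Polynomial K) :=
    U.submatrix e id with hU'
  set P : Matrix (Fin k ⊕ Fin r') (Fin k ⊕ Fin r') (Polynomial K) := V * U with hP
  -- the product as product of square matrices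
  have hPU : P = V' * U' := by
    refine Matrix.ext fun i j => ?_
    rw [hP, hV', hU']
    rw [Matrix.mul_apply, Matrix.mul_apply]
    exact (Fintype.sum_equiv e _ _ fun st => rfl).symm
  -- block structure
  set BJ : Matrix (Fin k) (Fin k) (Polynomial K) := Matrix.of fun i j => B i (emb j) with hBJ
  set Xm : Matrix (Fin r') (Fin k) (Polynomial K) := Matrix.of fun t j => w t (emb j) with hXm
  set Ym : Matrix (Fin r') (Fin r') (Polynomial K) :=
    Matrix.of fun t t' => ∑ l, w t l * M l (g t') with hYm
  have hBnull : ∀ i, B i ∈ leftNullMod M := by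
    intro i
    rw [← hB.2]
    exact Submodule.subset_span ⟨i, rfl⟩
  have hblock : P = Matrix.fromBlocks BJ 0 Xm Ym := by
    refine Matrix.ext fun st st' => ?_
    rw [hP, Matrix.mul_apply]
    rcases st with i | t <;> rcases st' with j | t'
    · simp only [hV, hv, hU, Matrix.of_apply, Sum.elim_inl, Matrix.fromBlocks_apply₁₁, hBJ]
      simp [mul_ite, mul_one, mul_zero, Finset.sum_ite_eq' Finset.univ (emb j)
        (fun l => B i l)]
    · simp only [hV, hv, hU, Matrix.of_apply, Sum.elim_inl, Sum.elim_inr,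
        Matrix.fromBlocks_apply₁₂, Matrix.zero_apply]
      have h1 : (B i ᵥ* M) (g t') = 0 := by
        have := hBnull i
        rw [leftNullMod, LinearMap.mem_ker] at this
        rw [← Matrix.vecMulLinear_apply, this]
        rfl
      rw [← h1, Matrix.vecMul, dotProduct]
    · simp only [hV, hv, hU, Matrix.of_apply, Sum.elim_inr, Sum.elim_inl,
        Matrix.fromBlocks_apply₂₁, hXm]
      simp [mul_ite, mul_one, mul_zero, Finset.sum_ite_eq' Finset.univ (emb j)
        (fun l => w t l)]
    · simp only [hV, hv, hU, Matrix.of_apply, Sum.elim_inr, Matrix.fromBlocks_apply₂₂, hYm]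
  -- determinant of V' is a unit
  have hVunit : IsUnit V'.det := by
    let bas : Module.Basis (Fin k ⊕ Fin r') (Polynomial K) (Fin m → Polynomial K) :=
      Module.Basis.mk hind hspan
    let b2 : Module.Basis (Fin k ⊕ Fin r') (Polynomial K) (Fin m → Polynomial K) :=
      (Pi.basisFun (Polynomial K) (Fin m)).reindex e.symm
    have hM1 : b2.toMatrix ⇑bas = V'ᵀ := by
      refine Matrix.ext fun st st' => ?_
      rw [Module.Basis.toMatrix_apply]
      show (b2.repr (bas st')) st = V' st' st
      rw [Module.Basis.repr_reindex_apply]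
      simp only [Pi.basisFun_repr, Equiv.symm_symm]
      have : bas st' = v st' := by
        show (Module.Basis.mk hind hspan) st' = v st'
        rw [Module.Basis.coe_mk]
      rw [this]
      rfl
    have h2 : b2.toMatrix ⇑bas * bas.toMatrix ⇑b2 = 1 := Module.Basis.toMatrix_mul_toMatrix_flip b2 bas
    have h3 : IsUnit (b2.toMatrix ⇑bas).det := by
      apply IsUnit.of_mul_eq_one (bas.toMatrix ⇑b2).det
      rw [← Matrix.det_mul, h2, Matrix.det_one]
    rw [hM1, Matrix.det_transpose] at h3
    exact h3
  -- degree bound for det U'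
  have hUdeg : U'.det.natDegree ≤ r' * d := by
    have := natDegree_det_le U' (Sum.elim (fun _ : Fin k => 0) (fun _ : Fin r' => d)) ?_
    · refine le_trans this (le_of_eq ?_)
      rw [Fintype.sum_sum_type]
      simp [Finset.sum_const, mul_comm]
    · intro i st
      rcases st with j | t
      · simp only [hU', hU, Matrix.submatrix_apply, Matrix.of_apply, id_eq, Sum.elim_inl]
        split <;> simp
      · simp only [hU', hU, Matrix.submatrix_apply, Matrix.of_apply, Sum.elim_inr]
        rw [hd, matDeg]
        exact Finset.le_sup (f := fun ij : Fin m × Fin n => (M ij.1 ij.2).natDegree)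
          (Finset.mem_univ (e i, g t))
  -- det U' is nonzero
  have hUne : U'.det ≠ 0 := by
    intro h0
    have hmapdet : (ratMat U').det = 0 := by
      have : (ratMat U').det = algebraMap (Polynomial K) (RatFunc K) U'.det := by
        rw [ratMat, ← RingHom.mapMatrix_apply, ← RingHom.map_det]
      rw [this, h0, map_zero]
    obtain ⟨u, hu, hmul⟩ := Matrix.exists_vecMul_eq_zero_iff.mpr hmapdet
    set u' : Fin m → RatFunc K := fun l => u (e.symm l) with hu'
    have hucomp : ∀ st, u st = u' (e st) := by
      intro st
      rw [hu']
      simp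
    have hvm : ∀ st, (∑ l, u' l * (ratMat U) l st) = 0 := by
      intro st
      have h1 := congrFun hmul st
      simp only [Pi.zero_apply] at h1
      rw [Matrix.vecMul, dotProduct] at h1
      have h2 : (∑ s, u s * ratMat U' s st) = ∑ l, u' l * ratMat U l st :=
        Fintype.sum_equiv e _ _ fun s => by rw [hucomp s]; rfl
      rw [← h2]
      exact h1
    have hJ : ∀ j : Fin k, u' (emb j) = 0 := by
      intro j
      have := hvm (Sum.inl j)
      have heval : ∀ l, u' l * (ratMat U) l (Sum.inl j)
          = if l = emb j then u' l else 0 := by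
        intro l
        rw [ratMat, Matrix.map_apply, hU]
        simp only [Matrix.of_apply, Sum.elim_inl]
        split <;> simp
      rw [Finset.sum_congr rfl fun l _ => heval l, Finset.sum_ite_eq' Finset.univ (emb j)] at this
      simpa using this
    have hcols : ∀ t : Fin r', (∑ l, u' l * ratMat M l (g t)) = 0 := by
      intro t
      have := hvm (Sum.inr t)
      have heval : ∀ l, (ratMat U) l (Sum.inr t) = ratMat M l (g t) := by
        intro l
        rw [ratMat, ratMat, Matrix.map_apply, Matrix.map_apply, hU]
        rfl
      rw [Finset.sum_congr rfl fun l _ => by rw [heval l]] at this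
      exact this
    -- the functional x ↦ ∑ l, u' l * x l
    set F : (Fin m → RatFunc K) →ₗ[RatFunc K] RatFunc K :=
      { toFun := fun c => ∑ l, u' l * c l
        map_add' := by
          intro x y
          simp [mul_add, Finset.sum_add_distrib]
        map_smul' := by
          intro a x
          simp [Finset.mul_sum, mul_left_comm] } with hF
    have hFg : ∀ t : Fin r', F (fun i => ratMat M i (g t)) = 0 := fun t => hcols t
    have hFall : ∀ j : Fin n, F (fun i => ratMat M i j) = 0 := by
      intro j
      have hsub : Set.range (fun s : Fin r' => fun i => ratMat M i (g s))
          ⊆ ↑(LinearMap.ker F) := by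
        rintro x ⟨t, rfl⟩
        exact hFg t
      have := Submodule.span_le.mpr hsub (hg j)
      exact this
    have hker : u' ∈ LinearMap.ker (ratMat M).vecMulLinear := by
      rw [LinearMap.mem_ker]
      funext j
      rw [Matrix.vecMulLinear_apply]
      show (u' ᵥ* ratMat M) j = 0
      rw [Matrix.vecMul, dotProduct]
      exact hFall j
    have := star_rat M hrank hk hB.1 hB.2 emb hdet u' hker hJ
    apply hu
    funext st
    rw [hucomp st, this]
    rfl
  -- coefficient bound: σ ≤ natDegree det BJ
  have hBdeg : ∀ i l, (B i l).natDegree ≤ δ i := by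
    intro i l
    simp only [hδ, vecDeg]
    exact Finset.le_sup (f := fun l => (B i l).natDegree) (Finset.mem_univ l)
  have hcoeff : BJ.det.coeff (∑ i, δ i) ≠ 0 := by
    rw [coeff_det_at_sum BJ δ (fun i j => hBdeg i (emb j))]
    have : (Matrix.of fun i j => (BJ i j).coeff (δ i))
        = (leadingRowMatrix (Matrix.of B)).submatrix id emb := by
      ext i j
      rfl
    rw [this]
    exact hdet
  have hσ : (∑ i, δ i) ≤ BJ.det.natDegree := le_natDegree_of_ne_zero hcoeff
  -- combine
  have hdetP1 : P.det = V'.det * U'.det := by rw [hPU, Matrix.det_mul]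
  have hdetP2 : P.det = BJ.det * Ym.det := by
    rw [hblock, Matrix.det_fromBlocks_zero₁₂]
  have hPne : P.det ≠ 0 := by
    rw [hdetP1]
    exact mul_ne_zero hVunit.ne_zero hUne
  have hBJne : BJ.det ≠ 0 := by
    intro h0
    rw [hdetP2, h0, zero_mul] at hPne
    exact hPne rfl
  have hYne : Ym.det ≠ 0 := by
    intro h0
    rw [hdetP2, h0, mul_zero] at hPne
    exact hPne rfl
  have hnd1 : P.det.natDegree = U'.det.natDegree := by
    rw [hdetP1, natDegree_mul hVunit.ne_zero hUne, natDegree_eq_zero_of_isUnit hVunit, zero_add]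
  have hnd2 : P.det.natDegree = BJ.det.natDegree + Ym.det.natDegree := by
    rw [hdetP2, natDegree_mul hBJne hYne]
  calc (∑ i, δ i) ≤ BJ.det.natDegree := hσ
    _ ≤ BJ.det.natDegree + Ym.det.natDegree := Nat.le_add_right _ _
    _ = U'.det.natDegree := by omega
    _ ≤ r' * d := hUdeg

/-- The Kronecker indices of a degree-`d`, rank-`r` polynomial matrix
sum to at most `r d`; in particular its left nullspace module has a basis of `m − r`
polynomial vectors of degree sum at most `r d`. -/
theorem kronecker_sum_le_rank_mul_degree
    {m n d r k : ℕ} (M : Matrix (Fin m) (Fin n) (Polynomial K))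
    (hdeg : matDeg M = d) (hrank : polyRank M = r) (hk : k = m - r)
    (N : Fin k → (Fin m → Polynomial K)) (δ : Fin k → ℕ)
    (hN : IsMinimalNullBasis M N) (hδ : ∀ i, vecDeg (N i) = δ i) (hmono : Monotone δ) :
    (∑ i, δ i) ≤ r * d ∧
    ∃ N' : Fin k → (Fin m → Polynomial K),
      IsNullBasis M N' ∧ (∑ i, vecDeg (N' i)) ≤ r * d := by
  obtain ⟨hNbasis, hNmin⟩ := hN
  obtain ⟨B, hBbasis, hrowred, hBmin⟩ := exists_good_basis M ⟨N, hNbasis⟩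
  have hbound : (∑ i, vecDeg (B i)) ≤ r * matDeg M :=
    sum_vecDeg_le_of_rowReduced M hrank hk hBbasis hrowred
  rw [hdeg] at hbound
  have hsum : (∑ i, vecDeg (N i)) ≤ ∑ i, vecDeg (B i) := by
    apply sum_le_of_card_filter_le
    intro t
    exact hNmin B hBbasis t
  have hδsum : (∑ i, δ i) = ∑ i, vecDeg (N i) :=
    Finset.sum_congr rfl fun i _ => (hδ i).symm
  refine ⟨?_, B, hBbasis, hbound⟩
  rw [hδsum]
  omega

end PolyNull
end
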